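/- arXiv:1707.04130 — 8 statements merged into one kernel-verified Lean document; each statement's English description precedes it below -/
import Mathlib

section
/- Define a_n = Γ(n) Γ(2p) / Γ(n + 2p - 1) for n ≥ 1 and M_n = a_n S_n. Then (M_n) is a martingale with respect to the filtration F_n = σ(X_1,...,X_n), i.e., E[M_{n+1} | F_n] = M_n almost surely. -/
open MeasureTheory ProbabilityTheory Real Filter Finset
open scoped ENNReal

/-- The expectation of a Rademacher(p) variable is `2p-1`. -/
lemma erw_integral_rademacher {Ω : Type*} [m0 : MeasurableSpace Ω] (μ : Measure Ω)
    [IsProbabilityMeasure μ] (p : ℝ) (hp : 0 ≤ p) (α : Ω → ℝ)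
    (hαmeas : Measurable α) (hαpm : ∀ ω, α ω = 1 ∨ α ω = -1)
    (hαlaw : μ {ω | α ω = 1} = ENNReal.ofReal p) :
    ∫ ω, α ω ∂μ = 2 * p - 1 := by
  have hS : MeasurableSet {ω | α ω = 1} := hαmeas (measurableSet_singleton 1)
  have hdecomp : (fun ω => α ω)
      = fun ω => 2 * Set.indicator {ω | α ω = 1} (fun _ => (1:ℝ)) ω - 1 := by
    funext ω
    rcases hαpm ω with h | h <;> simp [Set.indicator_apply, h] <;> norm_num
  have hind : Integrable (Set.indicator {ω | α ω = 1} (fun _ => (1:ℝ))) μ :=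
    (integrable_const (1:ℝ)).indicator hS
  calc ∫ ω, α ω ∂μ
      = ∫ ω, (2 * Set.indicator {ω | α ω = 1} (fun _ => (1:ℝ)) ω - 1) ∂μ := by rw [← hdecomp]
    _ = 2 * p - 1 := by
        rw [integral_sub (hind.const_mul 2) (integrable_const 1), integral_const_mul,
          integral_indicator_const _ hS, integral_const]
        simp [hαlaw, measureReal_def, ENNReal.toReal_ofReal hp]


/-- Expectation of `α · 1_{β = k}` for independent `α ~ R(p)` and uniform `β`. -/
lemma erw_integral_weight {Ω : Type*} [m0 : MeasurableSpace Ω] (μ : Measure Ω)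
    [IsProbabilityMeasure μ] (p : ℝ) (hp : 0 ≤ p) (n k : ℕ) (hn : 1 ≤ n)
    (α : Ω → ℝ) (β : Ω → ℕ) (hαmeas : Measurable α) (hβmeas : Measurable β)
    (hαpm : ∀ ω, α ω = 1 ∨ α ω = -1) (hαlaw : μ {ω | α ω = 1} = ENNReal.ofReal p)
    (hβlaw : μ {ω | β ω = k} = (n : ℝ≥0∞)⁻¹) (hind : IndepFun α β μ) :
    ∫ ω, (if β ω = k then α ω else 0) ∂μ = (2 * p - 1) * (n : ℝ)⁻¹ := by
  set G : Ω → ℝ := fun ω => if β ω = k then 1 else 0 with hG_def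
  have hGmeas : Measurable G :=
    Measurable.ite (hβmeas (measurableSet_singleton k)) measurable_const measurable_const
  have hGint : Integrable G μ := by
    refine Integrable.mono' (integrable_const (1:ℝ)) hGmeas.aestronglyMeasurable
      (ae_of_all _ fun ω => ?_)
    simp only [hG_def]; split <;> simp
  have hZeq : (fun ω => if β ω = k then α ω else 0) = fun ω => α ω * G ω := by
    funext ω
    simp only [hG_def]
    split <;> simp
  have hGind : IndepFun α G μ := by
    have : G = (fun j : ℕ => if j = k then (1:ℝ) else 0) ∘ β := rfl
    rw [this]
    exact hind.comp measurable_id measurable_from_top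
  have hαint : Integrable α μ := by
    refine Integrable.mono' (integrable_const (1:ℝ)) hαmeas.aestronglyMeasurable
      (ae_of_all _ fun ω => ?_)
    rcases hαpm ω with h | h <;> simp [h]
  have hGval : ∫ ω, G ω ∂μ = (n : ℝ)⁻¹ := by
    have hGin : G = Set.indicator {ω | β ω = k} (fun _ => (1:ℝ)) := by
      funext ω
      simp [hG_def, Set.indicator_apply]
    have hs : MeasurableSet {ω | β ω = k} := hβmeas (measurableSet_singleton k)
    rw [hGin, integral_indicator_const _ hs, measureReal_def, hβlaw]
    simp [ENNReal.toReal_inv]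
  have hαval : ∫ ω, α ω ∂μ = 2 * p - 1 :=
    erw_integral_rademacher μ p hp α hαmeas hαpm hαlaw
  rw [hZeq, show (fun ω => α ω * G ω) = α * G from rfl,
    hGind.integral_mul_eq_mul_integral hαint.aestronglyMeasurable hGint.aestronglyMeasurable, hαval, hGval]

/-- For the elephant random walk with memory parameter `p ∈ (0,1]`, the process
`M_n = a_n S_n` with `a_n = Γ(n)Γ(2p)/Γ(n+2p-1)` is a martingale with respect to
`F_n = σ(X_1, …, X_n)`, i.e. `E[M_{n+1} | F_n] = M_n` a.s. -/
theorem erw_martingale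
    {Ω : Type*} [m0 : MeasurableSpace Ω] (μ : Measure Ω) [IsProbabilityMeasure μ]
    (p q : ℝ) (hp : p ∈ Set.Ioc (0 : ℝ) 1) (hq : q ∈ Set.Icc (0 : ℝ) 1)
    (X : ℕ → Ω → ℝ) (α : ℕ → Ω → ℝ) (β : ℕ → Ω → ℕ)
    (hXmeas : ∀ i, Measurable (X i))
    (hαmeas : ∀ n, Measurable (α n)) (hβmeas : ∀ n, Measurable (β n))
    (hX1pm : ∀ ω, X 1 ω = 1 ∨ X 1 ω = -1)
    (hX1law : μ {ω | X 1 ω = 1} = ENNReal.ofReal q)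
    (hrec : ∀ n ≥ 1, ∀ ω, X (n + 1) ω = α n ω * X (β n ω) ω)
    (hαpm : ∀ n, ∀ ω, α n ω = 1 ∨ α n ω = -1)
    (hαlaw : ∀ n, μ {ω | α n ω = 1} = ENNReal.ofReal p)
    (hβrange : ∀ n ≥ 1, ∀ ω, β n ω ∈ Set.Icc 1 n)
    (hβlaw : ∀ n ≥ 1, ∀ k ∈ Set.Icc 1 n, μ {ω | β n ω = k} = (n : ℝ≥0∞)⁻¹)
    (hαβindep : ∀ n ≥ 1, IndepFun (α n) (β n) μ)
    (hindep : ∀ n ≥ 1,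
      Indep (MeasurableSpace.comap (fun ω => (α n ω, β n ω)) inferInstance)
        (MeasurableSpace.comap (fun ω => fun i : Fin n => X (i + 1) ω) inferInstance) μ)
    -- a_n and M_n
    (a : ℕ → ℝ)
    (ha : ∀ n ≥ 1, a n = Real.Gamma n * Real.Gamma (2 * p) / Real.Gamma (n + 2 * p - 1))
    (M : ℕ → Ω → ℝ)
    (hM : ∀ n ω, M n ω = a n * ∑ k ∈ Finset.Icc 1 n, X k ω)
    (n : ℕ) (hn : 1 ≤ n) :
    μ[M (n + 1) |
        MeasurableSpace.comap (fun ω => fun i : Fin n => X (i + 1) ω) inferInstance]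
      =ᵐ[μ] M n := by
  -- setup
  set g : Ω → (Fin n → ℝ) := fun ω => fun i : Fin n => X (i + 1) ω with hg_def
  have hgmeas : Measurable[m0] g := measurable_pi_lambda _ fun i => hXmeas (i + 1)
  set m : MeasurableSpace Ω := MeasurableSpace.comap g inferInstance with hm_def
  have hm : m ≤ m0 := hgmeas.comap_le
  have hgm : Measurable[m] g := Measurable.of_comap_le le_rfl
  haveI : SigmaFinite (μ.trim hm) := by
    haveI := isFiniteMeasure_trim (μ := μ) hm
    infer_instance
  -- X k is m-measurable for 1 ≤ k ≤ n
  have hXk_m : ∀ k ∈ Finset.Icc 1 n, StronglyMeasurable[m] (X k) := by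
    intro k hk
    rw [Finset.mem_Icc] at hk
    have hlt : k - 1 < n := by omega
    have : X k = (fun v : Fin n → ℝ => v ⟨k - 1, hlt⟩) ∘ g := by
      funext ω
      simp only [Function.comp_apply, hg_def]
      congr 1
      omega
    rw [this]
    exact ((measurable_pi_apply _).comp hgm).stronglyMeasurable
  -- all X k, k ≥ 1, take values ±1
  have hpm : ∀ k, 1 ≤ k → ∀ ω, X k ω = 1 ∨ X k ω = -1 := by
    intro k
    induction k using Nat.strong_induction_on with
    | _ k ih =>
      intro hk ω
      match k, hk with
      | 1, _ => exact hX1pm ω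
      | (j + 2), _ =>
        rw [hrec (j + 1) (by omega) ω]
        have hβ := hβrange (j + 1) (by omega) ω
        rw [Set.mem_Icc] at hβ
        have h1 := ih (β (j + 1) ω) (by omega) hβ.1 ω
        rcases hαpm (j + 1) ω with h | h <;> rcases h1 with h2 | h2 <;>
          simp [h, h2]
  -- integrability of the X k
  have hXint : ∀ k, 1 ≤ k → Integrable (X k) μ := by
    intro k hk
    refine Integrable.mono' (integrable_const (1:ℝ)) (hXmeas k).aestronglyMeasurable ?_
    refine ae_of_all _ fun ω => ?_
    rcases hpm k hk ω with h | h <;> simp [h]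
  -- the weight functions
  set Z : ℕ → Ω → ℝ := fun k ω => if β n ω = k then α n ω else 0 with hZ_def
  have hZmeas : ∀ k, Measurable[m0] (Z k) := fun k =>
    Measurable.ite (hβmeas n (measurableSet_singleton k)) (hαmeas n) measurable_const
  have hZbd : ∀ k ω, ‖Z k ω‖ ≤ 1 := by
    intro k ω
    simp only [hZ_def]
    split
    · rcases hαpm n ω with h | h <;> simp [h]
    · simp
  have hZint : ∀ k, Integrable (Z k) μ := fun k =>
    Integrable.mono' (integrable_const (1:ℝ)) (hZmeas k).aestronglyMeasurable
      (ae_of_all _ (hZbd k))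
  have hZXint : ∀ k ∈ Finset.Icc 1 n, Integrable (fun ω => Z k ω * X k ω) μ := by
    intro k hk
    rw [Finset.mem_Icc] at hk
    refine Integrable.mono' (integrable_const (1:ℝ))
      (((hZmeas k).mul (hXmeas k)).aestronglyMeasurable) (ae_of_all _ fun ω => ?_)
    have h1 := hZbd k ω
    rcases hpm k hk.1 ω with h | h <;>
      simp only [norm_mul, h, norm_one, norm_neg, mul_one] <;> exact h1
  -- decomposition of X (n+1)
  have hXn1 : ∀ ω, X (n + 1) ω = ∑ k ∈ Finset.Icc 1 n, Z k ω * X k ω := by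
    intro ω
    rw [hrec n hn ω]
    have hβ := hβrange n hn ω
    rw [Set.mem_Icc] at hβ
    rw [Finset.sum_eq_single (β n ω)]
    · simp [hZ_def]
    · intro k _ hne
      have hne' : β n ω ≠ k := fun h => hne h.symm
      show (if β n ω = k then α n ω else 0) * X k ω = 0
      rw [if_neg hne', zero_mul]
    · intro hmem
      exact absurd (Finset.mem_Icc.mpr hβ) hmem
  -- the constant c = (2p-1)/n
  set c : ℝ := (2 * p - 1) * (n : ℝ)⁻¹ with hc_def
  -- integral of Z k
  have hZint_eq : ∀ k ∈ Finset.Icc 1 n, ∫ ω, Z k ω ∂μ = c := by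
    intro k hk
    rw [Finset.mem_Icc] at hk
    exact erw_integral_weight (m0 := m0) μ p hp.1.le n k hn (α n) (β n) (hαmeas n) (hβmeas n)
      (hαpm n) (hαlaw n) (hβlaw n hn k (Set.mem_Icc.mpr hk)) (hαβindep n hn)
  -- conditional expectation of each summand
  have hterm : ∀ k ∈ Finset.Icc 1 n,
      μ[fun ω => Z k ω * X k ω | m] =ᵐ[μ] fun ω => X k ω * c := by
    intro k hk
    have hrw : (fun ω => Z k ω * X k ω) = fun ω => X k ω * Z k ω := by
      funext ω; ring
    rw [hrw]
    have hpull : μ[fun ω => X k ω * Z k ω | m] =ᵐ[μ] (X k) * μ[Z k | m] := by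
      have hbd : ∀ᵐ ω ∂μ, ‖X k ω‖ ≤ 1 := by
        refine ae_of_all _ fun ω => ?_
        rcases hpm k (Finset.mem_Icc.mp hk).1 ω with h | h <;> simp [h]
      exact condExp_stronglyMeasurable_mul_of_bound hm (hXk_m k hk) (hZint k) 1 hbd
    have hZconst : μ[Z k | m] =ᵐ[μ] fun _ => c := by
      have hpairmeas : Measurable[m0] (fun ω => (α n ω, β n ω)) :=
        (hαmeas n).prodMk (hβmeas n)
      have hle₁ : MeasurableSpace.comap (fun ω => (α n ω, β n ω)) inferInstance ≤ m0 :=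
        hpairmeas.comap_le
      have hZsm : StronglyMeasurable[MeasurableSpace.comap
          (fun ω => (α n ω, β n ω)) inferInstance] (Z k) := by
        have hF : Measurable (fun x : ℝ × ℕ => if x.2 = k then x.1 else 0) :=
          Measurable.ite (measurable_snd (measurableSet_singleton k)) measurable_fst
            measurable_const
        have : Z k = (fun x : ℝ × ℕ => if x.2 = k then x.1 else 0) ∘
            (fun ω => (α n ω, β n ω)) := rfl
        rw [this]
        exact (hF.comp (Measurable.of_comap_le le_rfl)).stronglyMeasurable
      have := condExp_indep_eq hle₁ hm hZsm (hindep n hn)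
      refine this.trans ?_
      rw [hZint_eq k hk]
    calc μ[fun ω => X k ω * Z k ω | m]
        =ᵐ[μ] (X k) * μ[Z k | m] := hpull
      _ =ᵐ[μ] fun ω => X k ω * c := by
          filter_upwards [hZconst] with ω hω
          simp [hω]
  -- conditional expectation of X (n+1)
  have hXn1ce : μ[X (n + 1) | m] =ᵐ[μ] fun ω => c * ∑ k ∈ Finset.Icc 1 n, X k ω := by
    have hfeq : X (n + 1)
        = (∑ k ∈ Finset.Icc 1 n, fun ω => Z k ω * X k ω : Ω → ℝ) := by
      funext ω
      rw [Finset.sum_apply]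
      exact hXn1 ω
    rw [hfeq]
    have h2 := condExp_finsetSum (μ := μ) (m := m)
      (f := fun k ω => Z k ω * X k ω) (s := Finset.Icc 1 n) hZXint
    have h3 : ∀ᵐ ω ∂μ, ∀ k ∈ (↑(Finset.Icc 1 n) : Set ℕ),
        (μ[fun ω => Z k ω * X k ω | m]) ω = X k ω * c :=
      (ae_ball_iff (Finset.countable_toSet _)).mpr fun k hk => hterm k (by simpa using hk)
    filter_upwards [h2, h3] with ω hω2 hω3
    rw [hω2, Finset.sum_apply]
    rw [Finset.sum_congr rfl fun k hk => hω3 k (by simpa using hk), ← Finset.sum_mul]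
    ring
  -- conditional expectation of S_n
  have hSce : μ[fun ω => ∑ k ∈ Finset.Icc 1 n, X k ω | m]
      =ᵐ[μ] fun ω => ∑ k ∈ Finset.Icc 1 n, X k ω := by
    refine Filter.EventuallyEq.of_eq (condExp_of_stronglyMeasurable hm ?_ ?_)
    · exact Finset.stronglyMeasurable_fun_sum _ fun k hk => hXk_m k hk
    · exact integrable_finset_sum _ fun k hk => hXint k (Finset.mem_Icc.mp hk).1
  -- key Gamma identity : a (n+1) * (1 + c) = a n
  have hkey : a (n + 1) * (1 + c) = a n := by
    have hn0 : (n : ℝ) ≠ 0 := Nat.cast_ne_zero.mpr (by omega)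
    have hnpos : (0:ℝ) < n := Nat.cast_pos.mpr (by omega)
    have hpos : (0:ℝ) < (n : ℝ) + 2 * p - 1 := by
      have : (1:ℝ) ≤ n := by exact_mod_cast hn
      nlinarith [hp.1]
    have hGn : Real.Gamma ((n : ℝ) + 1) = n * Real.Gamma n := Real.Gamma_add_one hn0
    have hG2 : Real.Gamma ((n : ℝ) + 1 + 2 * p - 1)
        = ((n : ℝ) + 2 * p - 1) * Real.Gamma ((n : ℝ) + 2 * p - 1) := by
      have : (n : ℝ) + 1 + 2 * p - 1 = ((n : ℝ) + 2 * p - 1) + 1 := by ring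
      rw [this, Real.Gamma_add_one hpos.ne']
    have hGpos : (0:ℝ) < Real.Gamma ((n : ℝ) + 2 * p - 1) := Real.Gamma_pos_of_pos hpos
    rw [ha n hn, ha (n + 1) (by omega)]
    push_cast
    rw [hGn, hG2, hc_def]
    field_simp
    ring
  -- assemble
  have hMdecomp : M (n + 1) = fun ω =>
      a (n + 1) • ((∑ k ∈ Finset.Icc 1 n, X k ω) + X (n + 1) ω) := by
    funext ω
    rw [hM (n + 1) ω, Finset.sum_Icc_succ_top (by omega : 1 ≤ n + 1)]
    simp [smul_eq_mul]
  rw [hMdecomp]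
  have hsmul : μ[fun ω => a (n + 1) •
        ((∑ k ∈ Finset.Icc 1 n, X k ω) + X (n + 1) ω) | m]
      =ᵐ[μ] a (n + 1) •
        μ[fun ω => (∑ k ∈ Finset.Icc 1 n, X k ω) + X (n + 1) ω | m] :=
    condExp_smul (a (n + 1)) _ m
  have hadd : μ[fun ω => (∑ k ∈ Finset.Icc 1 n, X k ω) + X (n + 1) ω | m]
      =ᵐ[μ] μ[fun ω => ∑ k ∈ Finset.Icc 1 n, X k ω | m] + μ[X (n + 1) | m] :=
    condExp_add (integrable_finset_sum _ fun k hk => hXint k (Finset.mem_Icc.mp hk).1)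
      (hXint (n + 1) (by omega)) m
  refine hsmul.trans ?_
  filter_upwards [hadd, hSce, hXn1ce] with ω h1 h2 h3
  simp only [Pi.smul_apply, smul_eq_mul] at h1 ⊢
  rw [h1]
  simp only [Pi.add_apply]
  rw [h2, h3, hM n ω]
  have : a (n + 1) * ((∑ k ∈ Finset.Icc 1 n, X k ω)
      + c * ∑ k ∈ Finset.Icc 1 n, X k ω)
      = (a (n + 1) * (1 + c)) * ∑ k ∈ Finset.Icc 1 n, X k ω := by ring
  rw [this, hkey]
end

section
/- With ε_{n+1} = S_{n+1} - γ_n S_n as above, for all n ≥ 1, E[ε_{n+1}^4 | F_n] = 1 - 3(2p-1)^4 (S_n/n)^4 + 2(2p-1)^2 (S_n/n)^2 almost surely; in particular E[ε_{n+1}^4 | F_n] ≤ 4/3 almost surely. -/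
open MeasureTheory ProbabilityTheory Real Filter Finset

/-- With `ε_{n+1} = S_{n+1} - γ_n S_n`,
`E[ε_{n+1}⁴ | F_n] = 1 - 3(2p-1)⁴ (S_n/n)⁴ + 2(2p-1)² (S_n/n)²` a.s.,
and in particular `E[ε_{n+1}⁴ | F_n] ≤ 4/3` a.s. -/
theorem erw_condexp_eps_four
    {Ω : Type*} [m0 : MeasurableSpace Ω] (μ : Measure Ω) [IsProbabilityMeasure μ]
    (p : ℝ) (hp : p ∈ Set.Icc (0 : ℝ) 1)
    (ℱ : ℕ → MeasurableSpace Ω) (hℱ : ∀ n, ℱ n ≤ m0) (hmono : Monotone ℱ)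
    (X : ℕ → Ω → ℝ)
    (hadp : ∀ i, Measurable[ℱ i] (X i))
    (hpm : ∀ i ≥ 1, ∀ ω, X i ω = 1 ∨ X i ω = -1)
    (S : ℕ → Ω → ℝ) (hS : ∀ n ω, S n ω = ∑ k ∈ Finset.Icc 1 n, X k ω)
    (ε : ℕ → Ω → ℝ)
    (hε : ∀ n ≥ 1, ∀ ω, ε (n + 1) ω = S (n + 1) ω - (((n : ℝ) + 2 * p - 1) / n) * S n ω)
    (hCE : ∀ n ≥ 1, μ[X (n + 1) | ℱ n] =ᵐ[μ] fun ω => (2 * p - 1) * S n ω / n)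
    (n : ℕ) (hn : 1 ≤ n) :
    (μ[fun ω => (ε (n + 1) ω) ^ 4 | ℱ n]
      =ᵐ[μ] fun ω => 1 - 3 * (2 * p - 1) ^ 4 * (S n ω / n) ^ 4
        + 2 * (2 * p - 1) ^ 2 * (S n ω / n) ^ 2)
    ∧ ∀ᵐ ω ∂μ, (μ[fun ω => (ε (n + 1) ω) ^ 4 | ℱ n]) ω ≤ 4 / 3 := by
  have hn0 : (n : ℝ) ≠ 0 := Nat.cast_ne_zero.mpr (by omega)
  set c : Ω → ℝ := fun ω => (2 * p - 1) * S n ω / n with hc_def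
  -- measurability of S n w.r.t. ℱ n
  have hSmeas : Measurable[ℱ n] (S n) := by
    have : S n = fun ω => ∑ k ∈ Finset.Icc 1 n, X k ω := funext (hS n)
    rw [this]
    exact Finset.measurable_sum _ fun k hk =>
      (hadp k).mono (hmono (Finset.mem_Icc.mp hk).2) le_rfl
  have hcmeas : Measurable[ℱ n] c := ((measurable_const.mul hSmeas).div_const _)
  -- bounds
  have habs : ∀ ω, |c ω| ≤ 1 := by
    intro ω
    have hSb : |S n ω| ≤ n := by
      rw [hS]
      calc |∑ k ∈ Finset.Icc 1 n, X k ω| ≤ ∑ k ∈ Finset.Icc 1 n, |X k ω| :=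
            Finset.abs_sum_le_sum_abs _ _
        _ ≤ ∑ k ∈ Finset.Icc 1 n, 1 := by
            refine Finset.sum_le_sum fun k hk => ?_
            rcases hpm k (Finset.mem_Icc.mp hk).1 ω with h | h <;> simp [h]
        _ = n := by simp
    have hpb : |2 * p - 1| ≤ 1 := by
      obtain ⟨h0, h1⟩ := hp; rw [abs_le]; constructor <;> linarith
    have : |c ω| = |2 * p - 1| * |S n ω| / n := by
      rw [hc_def]; rw [abs_div, abs_mul, Nat.abs_cast]
    rw [this]
    rw [div_le_one (by positivity)]
    calc |2 * p - 1| * |S n ω| ≤ 1 * (n : ℝ) := by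
          exact mul_le_mul hpb hSb (abs_nonneg _) zero_le_one
      _ = n := one_mul _
  -- pointwise identity
  have hkey : ∀ ω, (ε (n + 1) ω) ^ 4
      = (1 + 6 * c ω ^ 2 + c ω ^ 4) + (-4 * c ω - 4 * c ω ^ 3) * X (n + 1) ω := by
    intro ω
    have hε' : ε (n + 1) ω = X (n + 1) ω - c ω := by
      rw [hε n hn ω, hS (n + 1), hS n]
      rw [Finset.sum_Icc_succ_top (by omega : 1 ≤ n + 1)]
      rw [hc_def]
      have hSn : S n ω = ∑ k ∈ Finset.Icc 1 n, X k ω := hS n ω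
      rw [← hSn]
      field_simp
      ring
    rw [hε']
    rcases hpm (n + 1) (by omega) ω with h | h <;> rw [h] <;> ring
  -- integrability helpers
  have hXmeas : Measurable (X (n + 1)) := (hadp (n + 1)).mono (hℱ (n + 1)) le_rfl
  have hXint : Integrable (X (n + 1)) μ := by
    refine ⟨hXmeas.aestronglyMeasurable, ?_⟩
    refine HasFiniteIntegral.mono' (g := fun _ => (1 : ℝ))
      (integrable_const 1).hasFiniteIntegral ?_
    filter_upwards with ω
    rcases hpm (n + 1) (by omega) ω with h | h <;> simp [h]
  have hgmeas : Measurable[ℱ n] fun ω => 1 + 6 * c ω ^ 2 + c ω ^ 4 := by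
    exact (measurable_const.add ((hcmeas.pow_const 2).const_mul 6)).add (hcmeas.pow_const 4)
  have hhmeas : Measurable[ℱ n] fun ω => -4 * c ω - 4 * c ω ^ 3 := by
    exact (hcmeas.const_mul (-4)).sub ((hcmeas.pow_const 3).const_mul 4)
  have hbound : ∀ (f : Ω → ℝ) (C : ℝ), Measurable f → (∀ ω, |f ω| ≤ C) → Integrable f μ := by
    intro f C hf hC
    refine ⟨hf.aestronglyMeasurable, ?_⟩
    refine HasFiniteIntegral.mono' (g := fun _ => C)
      (integrable_const C).hasFiniteIntegral ?_
    filter_upwards with ω using by simpa using hC ω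
  have hgint : Integrable (fun ω => 1 + 6 * c ω ^ 2 + c ω ^ 4) μ := by
    refine hbound _ 8 (hgmeas.mono (hℱ n) le_rfl) fun ω => ?_
    have := habs ω
    have h2 : c ω ^ 2 ≤ 1 := by nlinarith [abs_nonneg (c ω), sq_abs (c ω)]
    have h4 : c ω ^ 4 ≤ 1 := by nlinarith
    have h2' : (0:ℝ) ≤ c ω ^ 2 := sq_nonneg _
    have h4' : (0:ℝ) ≤ c ω ^ 4 := by positivity
    rw [abs_le]; constructor <;> nlinarith
  have hhint : Integrable (fun ω => (-4 * c ω - 4 * c ω ^ 3) * X (n + 1) ω) μ := by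
    refine hbound _ 8 ((hhmeas.mono (hℱ n) le_rfl).mul hXmeas) fun ω => ?_
    have h1 := habs ω
    have hX1 : |X (n + 1) ω| = 1 := by
      rcases hpm (n + 1) (by omega) ω with h | h <;> simp [h]
    rw [abs_mul, hX1, mul_one, ]
    have h3 : |c ω ^ 3| ≤ 1 := by
      rw [abs_pow]; exact pow_le_one₀ (abs_nonneg _) h1
    calc |-4 * c ω - 4 * c ω ^ 3| ≤ |(-4) * c ω| + |4 * c ω ^ 3| := abs_sub _ _
      _ = 4 * |c ω| + 4 * |c ω ^ 3| := by rw [abs_mul, abs_mul]; norm_num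
      _ ≤ 8 := by nlinarith
  have hεint : Integrable (fun ω => (ε (n + 1) ω) ^ 4) μ := by
    have : (fun ω => (ε (n + 1) ω) ^ 4)
        = fun ω => (1 + 6 * c ω ^ 2 + c ω ^ 4) + (-4 * c ω - 4 * c ω ^ 3) * X (n + 1) ω :=
      funext hkey
    rw [this]; exact hgint.add hhint
  -- main conditional expectation computation
  have hmain : μ[fun ω => (ε (n + 1) ω) ^ 4 | ℱ n]
      =ᵐ[μ] fun ω => 1 - 3 * (2 * p - 1) ^ 4 * (S n ω / n) ^ 4
        + 2 * (2 * p - 1) ^ 2 * (S n ω / n) ^ 2 := by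
    have h1 : (fun ω => (ε (n + 1) ω) ^ 4)
        = fun ω => (1 + 6 * c ω ^ 2 + c ω ^ 4) + (-4 * c ω - 4 * c ω ^ 3) * X (n + 1) ω :=
      funext hkey
    rw [h1]
    have hadd := condExp_add (m := ℱ n) (μ := μ) hgint hhint
    refine hadd.trans ?_
    have hg : μ[fun ω => 1 + 6 * c ω ^ 2 + c ω ^ 4 | ℱ n]
        =ᵐ[μ] fun ω => 1 + 6 * c ω ^ 2 + c ω ^ 4 := by
      rw [condExp_of_stronglyMeasurable (hℱ n) hgmeas.stronglyMeasurable hgint]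
    have hmul : μ[fun ω => (-4 * c ω - 4 * c ω ^ 3) * X (n + 1) ω | ℱ n]
        =ᵐ[μ] fun ω => (-4 * c ω - 4 * c ω ^ 3) * ((μ[X (n + 1) | ℱ n]) ω) := by
      exact condExp_mul_of_stronglyMeasurable_left hhmeas.stronglyMeasurable hhint hXint
    have hce := hCE n hn
    filter_upwards [hg, hmul, hce] with ω h1 h2 h3
    simp only [Pi.add_apply]
    rw [h1, h2, h3]
    rw [hc_def]
    simp only []
    field_simp
    ring
  refine ⟨hmain, ?_⟩
  filter_upwards [hmain] with ω h
  rw [h]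
  have h1 := habs ω
  set t := (2 * p - 1) * (S n ω / n) with ht
  have h1' : |t| ≤ 1 := by
    have : t = c ω := by rw [ht, hc_def]; ring
    rw [this]; exact habs ω
  have e2 : (2 * p - 1) ^ 2 * (S n ω / n) ^ 2 = t ^ 2 := by rw [ht]; ring
  have e4 : (2 * p - 1) ^ 4 * (S n ω / n) ^ 4 = t ^ 4 := by rw [ht]; ring
  rw [mul_assoc, mul_assoc, e2, e4]
  nlinarith [sq_nonneg (t ^ 2 - 1 / 3)]
end

section
/- Let a_n = Γ(n)Γ(2p)/Γ(n+2p-1) and v_n = Σ_{k=1}^n a_k^2. If 0 ≤ p < 3/4, then v_n / n^{3-4p} converges to (Γ(2p))^2 / (3 - 4p) as n → ∞. -/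
open Real Finset Filter Topology



lemma sum_rpow_bounds {α : ℝ} (hα : -1 < α) (n : ℕ) (hn : 1 ≤ n) :
    ((n:ℝ) ^ (α+1) - 1)/(α+1) ≤ (∑ k ∈ Finset.Icc 1 n, (k:ℝ) ^ α) ∧
    (∑ k ∈ Finset.Icc 1 n, (k:ℝ) ^ α) ≤ 1 + (((n:ℝ)+1) ^ (α+1) - 1)/(α+1) := by
  have hα1 : (0:ℝ) < α + 1 := by linarith
  have hmono : ∀ x y : ℝ, 0 ≤ x → x ≤ y → x ^ (α+1) ≤ y ^ (α+1) :=
    fun x y hx hxy => Real.rpow_le_rpow hx hxy hα1.le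
  have hbase : (n:ℝ) ^ (α+1) ≤ ((n:ℝ)+1) ^ (α+1) :=
    hmono _ _ (Nat.cast_nonneg n) (by linarith)
  rcases le_or_gt 0 α with hc | hc
  · -- monotone case
    have hm : ∀ b : ℕ, MonotoneOn (fun x : ℝ => x ^ α) (Set.Icc ((0:ℕ):ℝ) ((b:ℕ):ℝ)) := by
      intro b x hx y hy hxy
      exact Real.rpow_le_rpow (by simpa using hx.1) hxy hc
    constructor
    · have h := (hm n).integral_le_sum_Ico (Nat.zero_le n)
      rw [integral_rpow (Or.inl hα)] at h
      push_cast at h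
      rw [Real.zero_rpow hα1.ne'] at h
      have h2 : ∑ i ∈ Finset.Ico 0 n, ((i:ℝ)+1) ^ α = ∑ k ∈ Finset.Icc 1 n, (k:ℝ) ^ α := by
        rw [← Finset.Ico_add_one_right_eq_Icc, Finset.sum_Ico_eq_sum_range, Finset.sum_Ico_eq_sum_range]
        simp [add_comm]
      rw [h2] at h
      refine le_trans ((div_le_div_iff_of_pos_right hα1).mpr (by linarith)) h
    · have hm' : MonotoneOn (fun x : ℝ => x ^ α) (Set.Icc ((1:ℕ):ℝ) ((n+1:ℕ):ℝ)) :=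
        (hm (n+1)).mono (Set.Icc_subset_Icc (by norm_num) le_rfl)
      have h := hm'.sum_le_integral_Ico (by omega)
      rw [integral_rpow (Or.inl hα)] at h
      rw [Finset.Ico_add_one_right_eq_Icc] at h
      push_cast at h
      rw [Real.one_rpow] at h
      refine le_trans h (by linarith)
  · -- antitone case
    have ha : ∀ b : ℕ, AntitoneOn (fun x : ℝ => x ^ α) (Set.Icc ((1:ℕ):ℝ) ((b:ℕ):ℝ)) := by
      intro b x hx y hy hxy
      exact Real.rpow_le_rpow_of_nonpos (by simp at hx; linarith [hx.1]) hxy hc.le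
    constructor
    · have h := (ha (n+1)).integral_le_sum_Ico (by omega)
      rw [integral_rpow (Or.inl hα)] at h
      rw [Finset.Ico_add_one_right_eq_Icc] at h
      push_cast at h
      rw [Real.one_rpow] at h
      refine le_trans ((div_le_div_iff_of_pos_right hα1).mpr (by linarith)) h
    · have h := (ha n).sum_le_integral_Ico hn
      rw [integral_rpow (Or.inl hα)] at h
      push_cast at h
      rw [Real.one_rpow] at h
      have hsplit : (∑ k ∈ Finset.Icc 1 n, (k:ℝ) ^ α)
          = 1 + ∑ i ∈ Finset.Ico 1 n, (((i:ℝ))+1) ^ α := by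
        have h1 : (1:ℕ) ∈ Finset.Icc 1 n := by simp [hn]
        rw [← Finset.add_sum_erase _ _ h1, Finset.Icc_erase_left]
        have : ∑ x ∈ Finset.Ioc 1 n, ((x:ℝ)) ^ α = ∑ i ∈ Finset.Ico 1 n, (((i:ℝ))+1) ^ α := by
          rw [← Finset.Icc_add_one_left_eq_Ioc, ← Finset.Ico_add_one_right_eq_Icc, Finset.sum_Ico_eq_sum_range,
            Finset.sum_Ico_eq_sum_range]
          have : n + 1 - (1 + 1) = n - 1 := by omega
          rw [this]
          apply Finset.sum_congr rfl
          intro i _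
          push_cast
          ring_nf
        rw [this]
        norm_num
      have hd : ((n:ℝ)^(α+1)-1)/(α+1) ≤ (((n:ℝ)+1)^(α+1)-1)/(α+1) :=
        (div_le_div_iff_of_pos_right hα1).mpr (by linarith)
      rw [hsplit]
      linarith

lemma aux_div (a b : ℝ) : Tendsto (fun n : ℕ => ((n:ℝ)+a)/((n:ℝ)+b)) atTop (𝓝 1) := by
  have hb : Tendsto (fun n : ℕ => (n:ℝ) + b) atTop atTop :=
    tendsto_atTop_add_const_right _ b tendsto_natCast_atTop_atTop
  have h0 : Tendsto (fun n : ℕ => (a - b) / ((n:ℝ) + b)) atTop (𝓝 0) :=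
    Tendsto.div_atTop tendsto_const_nhds hb
  have h1 : Tendsto (fun n : ℕ => 1 + (a - b) / ((n:ℝ) + b)) atTop (𝓝 1) := by
    simpa using (tendsto_const_nhds (x := (1:ℝ))).add h0
  refine h1.congr' ?_
  filter_upwards [hb.eventually_ne_atTop 0] with n hn
  field_simp
  ring

lemma aux_rpow_atTop {t : ℝ} (ht : 0 < t) : Tendsto (fun n : ℕ => (n:ℝ) ^ t) atTop atTop :=
  (tendsto_rpow_atTop ht).comp tendsto_natCast_atTop_atTop

lemma sum_rpow_tendsto {α : ℝ} (hα : -1 < α) :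
    Tendsto (fun n : ℕ => (∑ k ∈ Finset.Icc 1 n, (k:ℝ) ^ α) / (n:ℝ) ^ (α+1))
      atTop (𝓝 (1/(α+1))) := by
  have hα1 : (0:ℝ) < α + 1 := by linarith
  have hN : Tendsto (fun n : ℕ => (n:ℝ) ^ (α+1)) atTop atTop := aux_rpow_atTop hα1
  have hNinv : Tendsto (fun n : ℕ => 1 / (n:ℝ) ^ (α+1)) atTop (𝓝 0) :=
    Tendsto.div_atTop tendsto_const_nhds hN
  -- ratio (n+1)^(α+1)/n^(α+1) → 1
  have hrat : Tendsto (fun n : ℕ => ((n:ℝ)+1) ^ (α+1) / (n:ℝ) ^ (α+1)) atTop (𝓝 1) := by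
    have h := (aux_div 1 0).rpow_const (p := α+1) (Or.inl one_ne_zero)
    rw [Real.one_rpow] at h
    refine h.congr' ?_
    filter_upwards [eventually_gt_atTop 0] with n hn
    have hn' : (0:ℝ) < (n:ℝ) := by exact_mod_cast hn
    simp only [add_zero]
    rw [Real.div_rpow (by linarith) hn'.le]
  -- lower sequence limit
  have hlo : Tendsto (fun n : ℕ => (((n:ℝ) ^ (α+1) - 1)/(α+1)) / (n:ℝ) ^ (α+1))
      atTop (𝓝 (1/(α+1))) := by
    have : Tendsto (fun n : ℕ => (1 - 1/(n:ℝ)^(α+1)) / (α+1)) atTop (𝓝 (1/(α+1))) := by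
      have := ((tendsto_const_nhds (x := (1:ℝ))).sub hNinv).div_const (α+1)
      simpa using this
    refine this.congr' ?_
    filter_upwards [hN.eventually_ne_atTop 0] with n hn
    field_simp
  have hup : Tendsto (fun n : ℕ => (1 + (((n:ℝ)+1) ^ (α+1) - 1)/(α+1)) / (n:ℝ) ^ (α+1))
      atTop (𝓝 (1/(α+1))) := by
    have : Tendsto (fun n : ℕ =>
        1/(n:ℝ)^(α+1) + (((n:ℝ)+1) ^ (α+1) / (n:ℝ) ^ (α+1) - 1/(n:ℝ)^(α+1)) / (α+1))
        atTop (𝓝 (1/(α+1))) := by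
      have := hNinv.add (((hrat.sub hNinv)).div_const (α+1))
      simpa using this
    refine this.congr' ?_
    filter_upwards [hN.eventually_ne_atTop 0] with n hn
    field_simp
  refine tendsto_of_tendsto_of_tendsto_of_le_of_le' hlo hup ?_ ?_
  · filter_upwards [eventually_ge_atTop 1, hN.eventually (eventually_gt_atTop 0)] with n hn hNpos
    exact (div_le_div_iff_of_pos_right hNpos).mpr (sum_rpow_bounds hα n hn).1
  · filter_upwards [eventually_ge_atTop 1, hN.eventually (eventually_gt_atTop 0)] with n hn hNpos
    exact (div_le_div_iff_of_pos_right hNpos).mpr (sum_rpow_bounds hα n hn).2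

lemma cesaro_rpow {α L : ℝ} (hα : -1 < α) {f : ℕ → ℝ}
    (hf : Tendsto (fun k : ℕ => f k / (k:ℝ) ^ α) atTop (𝓝 L)) :
    Tendsto (fun n : ℕ => (∑ k ∈ Finset.Icc 1 n, f k) / (n:ℝ) ^ (α+1))
      atTop (𝓝 (L/(α+1))) := by
  have hα1 : (0:ℝ) < α + 1 := by linarith
  set g : ℕ → ℝ := fun k => if k = 0 then 0 else (k:ℝ) ^ α with hg
  set F : ℕ → ℝ := fun k => if k = 0 then 0 else f k with hF
  have hgsum : ∀ n : ℕ, ∑ i ∈ Finset.range (n+1), g i = ∑ k ∈ Finset.Icc 1 n, (k:ℝ) ^ α := by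
    intro n
    rw [Finset.range_eq_Ico, ← Finset.Ico_add_one_right_eq_Icc]
    rw [Finset.sum_eq_sum_Ico_succ_bot (by omega)]
    simp only [hg, if_pos rfl, zero_add]
    exact Finset.sum_congr rfl (fun i hi => by
      rw [Finset.mem_Ico] at hi
      simp only [hg, if_neg (show i ≠ 0 by omega)])
  have hFsum : ∀ n : ℕ, ∑ i ∈ Finset.range (n+1), F i = ∑ k ∈ Finset.Icc 1 n, f k := by
    intro n
    rw [Finset.range_eq_Ico, ← Finset.Ico_add_one_right_eq_Icc]
    rw [Finset.sum_eq_sum_Ico_succ_bot (by omega)]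
    simp only [hF, if_pos rfl, zero_add]
    exact Finset.sum_congr rfl (fun i hi => by
      rw [Finset.mem_Ico] at hi
      simp only [hF, if_neg (show i ≠ 0 by omega)])
  have hg0 : 0 ≤ g := by
    intro k; by_cases hk : k = 0 <;> simp [hg, hk, Real.rpow_nonneg]
  have hS := sum_rpow_tendsto hα
  have hN : Tendsto (fun n : ℕ => (n:ℝ) ^ (α+1)) atTop atTop := aux_rpow_atTop hα1
  -- sum of g tends to atTop
  have hGtop : Tendsto (fun n : ℕ => ∑ i ∈ Finset.range n, g i) atTop atTop := by
    rw [← tendsto_add_atTop_iff_nat 1]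
    have : Tendsto (fun n : ℕ => ((∑ k ∈ Finset.Icc 1 n, (k:ℝ)^α) / (n:ℝ)^(α+1)) * (n:ℝ)^(α+1))
        atTop atTop := by
      refine Tendsto.pos_mul_atTop (by positivity) hS hN
    refine (this.congr' ?_)
    filter_upwards [hN.eventually_ne_atTop 0] with n hn
    rw [div_mul_cancel₀ _ hn, hgsum]
  -- littleO
  have hlo : (fun k => F k - L * g k) =o[atTop] g := by
    rw [Asymptotics.isLittleO_iff_tendsto']
    · have : Tendsto (fun k : ℕ => f k / (k:ℝ)^α - L) atTop (𝓝 0) := by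
        simpa using hf.sub (tendsto_const_nhds (x := L))
      refine this.congr' ?_
      filter_upwards [eventually_ge_atTop 1] with k hk
      have hk0 : k ≠ 0 := by omega
      simp only [hF, hg, if_neg hk0]
      have hkpos : (0:ℝ) < (k:ℝ)^α := Real.rpow_pos_of_pos (by exact_mod_cast hk) α
      field_simp
    · filter_upwards [eventually_ge_atTop 1] with k hk hgk
      have hk0 : k ≠ 0 := by omega
      simp only [hg, if_neg hk0] at hgk
      exact absurd hgk (Real.rpow_pos_of_pos (by exact_mod_cast hk) α).ne'
  have hsum := hlo.sum_range hg0 hGtop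
  -- convert to ratio
  have hratio : Tendsto (fun n : ℕ =>
      (∑ i ∈ Finset.range n, F i) / (∑ i ∈ Finset.range n, g i)) atTop (𝓝 L) := by
    have h0 : Tendsto (fun n : ℕ =>
        (∑ i ∈ Finset.range n, (F i - L * g i)) / (∑ i ∈ Finset.range n, g i)) atTop (𝓝 0) := by
      rw [← Asymptotics.isLittleO_iff_tendsto']
      · exact hsum
      · filter_upwards [hGtop.eventually_ne_atTop 0] with n hn h
        exact absurd h hn
    have h1 : Tendsto (fun n : ℕ =>
        (∑ i ∈ Finset.range n, (F i - L * g i)) / (∑ i ∈ Finset.range n, g i) + L)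
        atTop (𝓝 L) := by simpa using h0.add (tendsto_const_nhds (x := L))
    refine h1.congr' ?_
    filter_upwards [hGtop.eventually_ne_atTop 0] with n hn
    rw [Finset.sum_sub_distrib, ← Finset.mul_sum, sub_div, mul_div_assoc,
      div_self hn, mul_one]
    ring
  -- final assembly
  have hfinal : Tendsto (fun n : ℕ =>
      ((∑ i ∈ Finset.range (n+1), F i) / (∑ i ∈ Finset.range (n+1), g i)) *
        ((∑ k ∈ Finset.Icc 1 n, (k:ℝ)^α) / (n:ℝ)^(α+1))) atTop (𝓝 (L * (1/(α+1)))) := by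
    exact ((tendsto_add_atTop_iff_nat 1).mpr hratio).mul hS
  rw [mul_one_div] at hfinal
  refine hfinal.congr' ?_
  have hG1 : Tendsto (fun n : ℕ => ∑ i ∈ Finset.range (n+1), g i) atTop atTop :=
    (tendsto_add_atTop_iff_nat 1).mpr hGtop
  filter_upwards [hG1.eventually_ne_atTop 0] with n hn
  rw [hFsum, hgsum, ← hgsum n] at *
  field_simp

lemma gamma_prod (s : ℝ) (hs : 0 < s) (n : ℕ) :
    ∏ j ∈ Finset.range (n+1), (s + j) = Real.Gamma (s + n + 1) / Real.Gamma s := by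
  induction n with
  | zero =>
    rw [show Real.Gamma (s + (0:ℕ) + 1) = Real.Gamma (s+1) by norm_num,
      Real.Gamma_add_one hs.ne', mul_div_assoc,
      div_self (Real.Gamma_pos_of_pos hs).ne', mul_one]
    simp
  | succ n ih =>
    rw [Finset.prod_range_succ, ih]
    have h1 : s + (n:ℝ) + 1 ≠ 0 := by positivity
    have : Real.Gamma (s + (n+1:ℕ) + 1) = (s + n + 1) * Real.Gamma (s + n + 1) := by
      rw [show (s + ((n+1:ℕ):ℝ) + 1) = (s + n + 1) + 1 by push_cast; ring,
        Real.Gamma_add_one h1]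
    rw [this]
    push_cast
    field_simp
    ring

lemma gammaseq_eq (p : ℝ) (hp : 0 < p) (n : ℕ) :
    Real.GammaSeq (2*p) n
      = (n:ℝ)^(2*p) * Real.Gamma ((n:ℝ)+1) * Real.Gamma (2*p) / Real.Gamma ((n:ℝ)+1+2*p) := by
  have h2p : (0:ℝ) < 2*p := by linarith
  rw [Real.GammaSeq, gamma_prod _ h2p n, Real.Gamma_nat_eq_factorial]
  have hG : Real.Gamma (2*p + n + 1) = Real.Gamma ((n:ℝ)+1+2*p) := by ring_nf
  rw [hG]
  have h1 : Real.Gamma ((n:ℝ)+1+2*p) ≠ 0 := (Real.Gamma_pos_of_pos (by positivity)).ne'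
  have h2 : Real.Gamma (2*p) ≠ 0 := (Real.Gamma_pos_of_pos h2p).ne'
  field_simp

lemma gamma_ratio_tendsto (p : ℝ) (hp : 0 < p) :
    Tendsto (fun k : ℕ =>
        (Real.Gamma k * Real.Gamma (2*p) / Real.Gamma ((k:ℝ) + 2*p - 1)) / (k:ℝ)^(1-2*p))
      atTop (𝓝 (Real.Gamma (2*p))) := by
  set c := Real.Gamma (2*p) with hc
  have hcpos : 0 < c := Real.Gamma_pos_of_pos (by linarith)
  rw [← tendsto_add_atTop_iff_nat 2]
  -- product form
  have hP : Tendsto (fun n : ℕ =>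
      (Real.GammaSeq (2*p) n / c) * (((n:ℝ)+1)/((n:ℝ)+2) * (((n:ℝ)+2)/((n:ℝ)+0))^(2*p)) * c)
      atTop (𝓝 c) := by
    have t1 : Tendsto (fun n : ℕ => Real.GammaSeq (2*p) n / c) atTop (𝓝 1) := by
      have := (Real.GammaSeq_tendsto_Gamma (2*p)).div_const c
      rwa [← hc, div_self hcpos.ne'] at this
    have t2 : Tendsto (fun n : ℕ => ((n:ℝ)+1)/((n:ℝ)+2)) atTop (𝓝 1) := aux_div 1 2
    have t3 : Tendsto (fun n : ℕ => (((n:ℝ)+2)/((n:ℝ)+0))^(2*p)) atTop (𝓝 1) := by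
      have := (aux_div 2 0).rpow_const (p := 2*p) (Or.inl one_ne_zero)
      rwa [Real.one_rpow] at this
    have := ((t1.mul (t2.mul t3)).mul (tendsto_const_nhds (x := c)))
    simpa using this
  refine hP.congr' ?_
  filter_upwards [eventually_ge_atTop 1] with n hn
  have hN : (0:ℝ) < (n:ℝ) := by exact_mod_cast hn
  have h2 : (0:ℝ) < (n:ℝ)+2 := by linarith
  have hG2 : (0:ℝ) < Real.Gamma ((n:ℝ)+1+2*p) := Real.Gamma_pos_of_pos (by positivity)
  have e1 : Real.Gamma (((n+2:ℕ):ℝ)) = ((n:ℝ)+1) * Real.Gamma ((n:ℝ)+1) := by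
    rw [show (((n+2:ℕ):ℝ)) = ((n:ℝ)+1) + 1 by push_cast; ring,
      Real.Gamma_add_one (by positivity)]
  have e2 : Real.Gamma (((n+2:ℕ):ℝ) + 2*p - 1) = Real.Gamma ((n:ℝ)+1+2*p) := by
    push_cast; ring_nf
  have hr2 : (((n:ℝ)+2)/((n:ℝ)+0))^(2*p) = ((n:ℝ)+2)^(2*p)/((n:ℝ))^(2*p) := by
    rw [add_zero, Real.div_rpow h2.le hN.le]
  have hr1 : ((n:ℝ)+2)^(1-2*p) * ((n:ℝ)+2)^(2*p) = ((n:ℝ)+2) := by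
    rw [← Real.rpow_add h2]
    norm_num
  have hA : (0:ℝ) < ((n:ℝ))^(2*p) := Real.rpow_pos_of_pos hN _
  have hB : (0:ℝ) < ((n:ℝ)+2)^(2*p) := Real.rpow_pos_of_pos h2 _
  have hC : (0:ℝ) < ((n:ℝ)+2)^(1-2*p) := Real.rpow_pos_of_pos h2 _
  rw [gammaseq_eq p hp n, e1, e2, hr2]
  rw [show ((n+2:ℕ):ℝ) = (n:ℝ)+2 by push_cast; ring]
  set G1 := Real.Gamma ((n:ℝ)+1) with hG1def
  set G2 := Real.Gamma ((n:ℝ)+1+2*p) with hG2def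
  trans (((n:ℝ)+1)*G1*c*(((n:ℝ)+2)^(2*p))/(G2*((n:ℝ)+2)))
  · field_simp
    ring
  · rw [div_div, div_eq_div_iff (by positivity) (by positivity)]
    linear_combination (((n:ℝ)+1)*G1*c*G2) * hr1

/-- Diffusive regime `0 < p < 3/4`: with `a_n = Γ(n)Γ(2p)/Γ(n+2p-1)` and
`v_n = Σ_{k=1}^n a_k²`, we have `v_n / n^{3-4p} → Γ(2p)² / (3-4p)`. -/
theorem erw_vn_diffusive (p : ℝ) (hp0 : 0 < p) (hp1 : p < 3 / 4) :
    Tendsto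
      (fun n : ℕ =>
        (∑ k ∈ Finset.Icc 1 n,
            (Real.Gamma k * Real.Gamma (2 * p) / Real.Gamma (k + 2 * p - 1)) ^ 2)
          / (n : ℝ) ^ (3 - 4 * p))
      atTop (nhds ((Real.Gamma (2 * p)) ^ 2 / (3 - 4 * p))) := by
  set c := Real.Gamma (2*p) with hc
  have hα : (-1:ℝ) < 2 - 4*p := by linarith
  have h1 := gamma_ratio_tendsto p hp0
  have hkey : Tendsto (fun k : ℕ =>
      ((Real.Gamma k * c / Real.Gamma ((k:ℝ) + 2*p - 1)) ^ 2) / (k:ℝ)^(2-4*p))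
      atTop (𝓝 (c^2)) := by
    have h2 := h1.mul h1
    rw [← pow_two] at h2
    refine h2.congr' ?_
    filter_upwards [eventually_ge_atTop 1] with k hk
    have hkpos : (0:ℝ) < (k:ℝ) := by exact_mod_cast hk
    rw [div_mul_div_comm, ← pow_two, ← Real.rpow_add hkpos,
      show (1-2*p)+(1-2*p) = 2-4*p by ring]
  have := cesaro_rpow hα hkey
  rw [show (2-4*p)+1 = 3-4*p by ring] at this
  convert this using 2
end

section
/- Let a_n = Γ(n)Γ(3/2)/Γ(n+1/2) (the case p = 3/4) and v_n = Σ_{k=1}^n a_k^2. Then v_n / log n → π/4 as n → ∞. -/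
open Real Finset Filter Nat Topology

lemma erw_gamma_half_int (k : ℕ) :
    Real.Gamma (k + 1/2) = √π * (2*k)! / (4^k * (k)!) := by
  induction k with
  | zero => norm_num [show (2:ℝ)⁻¹ = 1/2 from by norm_num, Real.Gamma_one_half_eq]
  | succ n ih =>
    have hne : ((n:ℝ) + 1/2) ≠ 0 := by positivity
    have : ((n:ℝ) + 1 + 1/2) = ((n:ℝ) + 1/2) + 1 := by ring
    rw [Nat.cast_add, Nat.cast_one, this, Real.Gamma_add_one hne, ih]
    have h2 : (2*(n+1))! = (2*n+2) * ((2*n+1) * (2*n)!) := by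
      have h : 2*(n+1) = (2*n+1)+1 := by ring
      rw [h, Nat.factorial_succ, Nat.factorial_succ]
    have h3 : (n+1)! = (n+1) * (n)! := Nat.factorial_succ n
    rw [h2, h3]
    push_cast
    have h4 : (4:ℝ)^n ≠ 0 := by positivity
    have h5 : ((n)! :ℝ) ≠ 0 := by exact_mod_cast (Nat.factorial_pos n).ne'
    field_simp
    ring

lemma erw_gamma_three_half : Real.Gamma (3/2) = √π / 2 := by
  have : (3/2 : ℝ) = 1/2 + 1 := by norm_num
  rw [this, Real.Gamma_add_one (by norm_num), Real.Gamma_one_half_eq]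
  ring

lemma erw_a_val (m : ℕ) :
    Real.Gamma (m+1) * Real.Gamma (3/2) / Real.Gamma ((m+1 : ℕ) + 1/2) =
      4^(m+1) * ((m)! * (m+1)!) / (2 * (2*(m+1))!) := by
  rw [erw_gamma_half_int, erw_gamma_three_half]
  rw [show ((m:ℝ)+1) = ((m:ℕ):ℝ) + 1 from by push_cast; ring,
    Real.Gamma_nat_eq_factorial]
  have hπ : √π ≠ 0 := by positivity
  have h4 : (4:ℝ)^(m+1) ≠ 0 := by positivity
  have hf : (((m+1)! : ℕ):ℝ) ≠ 0 := by exact_mod_cast (Nat.factorial_pos _).ne'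
  have hf2 : (((2*(m+1))! : ℕ):ℝ) ≠ 0 := by exact_mod_cast (Nat.factorial_pos _).ne'
  field_simp

lemma erw_stirling_id (k : ℕ) (hk : 1 ≤ k) :
    (16:ℝ)^k * ((k)! :ℝ)^4 / (4 * k * (((2*k))! :ℝ)^2) =
      Stirling.stirlingSeq k ^ 4 / (4 * Stirling.stirlingSeq (2*k) ^ 2) := by
  have hK : (0:ℝ) < (k:ℝ) := by exact_mod_cast hk
  have hApos : (0:ℝ) < ((k)! :ℝ) := by exact_mod_cast Nat.factorial_pos k
  have hBpos : (0:ℝ) < (((2*k))! :ℝ) := by exact_mod_cast Nat.factorial_pos (2*k)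
  have hPpos : (0:ℝ) < ((k:ℝ) / Real.exp 1)^k := pow_pos (div_pos hK (Real.exp_pos 1)) k
  have h1 : Stirling.stirlingSeq k ^ 4
      = ((k)! :ℝ)^4 / ((2*(k:ℝ)) ^ 2 * ((k:ℝ)/Real.exp 1)^(k*4)) := by
    rw [Stirling.stirlingSeq, div_pow, mul_pow, ← pow_mul,
      show (√(2*(k:ℝ)))^4 = ((√(2*(k:ℝ)))^2)^2 from by rw [← pow_mul],
      Real.sq_sqrt (by positivity)]
  have h2 : Stirling.stirlingSeq (2*k) ^ 2
      = (((2*k))! :ℝ)^2 /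
        ((2*(2*(k:ℝ))) * ((2:ℝ)^(2*k*2) * ((k:ℝ)/Real.exp 1)^(2*k*2))) := by
    rw [Stirling.stirlingSeq, div_pow, mul_pow, ← pow_mul,
      Real.sq_sqrt (by positivity)]
    push_cast
    ring
  rw [show (16:ℝ) = 2^4 from by norm_num, ← pow_mul, h1, h2]
  have h2e : (0:ℝ) < (2:ℝ)^(2*k*2) := by positivity
  field_simp
  ring

/-- The key limit: `k · a_k² → π/4`. -/
lemma erw_k_mul_sq_tendsto :
    Tendsto (fun k : ℕ =>
        (k:ℝ) * (Real.Gamma k * Real.Gamma (3/2) / Real.Gamma (k + 1/2))^2)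
      atTop (𝓝 (π/4)) := by
  have h2k : Tendsto (fun k : ℕ => 2*k) atTop atTop :=
    tendsto_atTop_mono (fun n => Nat.le_mul_of_pos_left n (by norm_num)) tendsto_id
  have hs := Stirling.tendsto_stirlingSeq_sqrt_pi
  have hs2 : Tendsto (fun k : ℕ => Stirling.stirlingSeq (2*k)) atTop (𝓝 (√π)) :=
    hs.comp h2k
  have hπpos : (0:ℝ) < π := Real.pi_pos
  have hlim : Tendsto (fun k : ℕ =>
      Stirling.stirlingSeq k ^ 4 / (4 * Stirling.stirlingSeq (2*k) ^ 2))
      atTop (𝓝 (π/4)) := by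
    have hden : (4 * (√π)^2 : ℝ) ≠ 0 := by
      rw [Real.sq_sqrt hπpos.le]; positivity
    have h := (hs.pow 4).div ((tendsto_const_nhds (x := (4:ℝ))).mul (hs2.pow 2)) hden
    have hval : (√π)^4 / (4 * (√π)^2) = π/4 := by
      rw [show (√π)^4 = ((√π)^2)^2 from by rw [← pow_mul], Real.sq_sqrt hπpos.le]
      field_simp
    rw [hval] at h
    exact h
  apply hlim.congr'
  filter_upwards [eventually_ge_atTop 1] with k hk
  obtain ⟨m, rfl⟩ : ∃ m, k = m + 1 := ⟨k - 1, by omega⟩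
  have hav : Real.Gamma ((m+1:ℕ):ℝ) * Real.Gamma (3/2) /
      Real.Gamma (((m+1:ℕ):ℝ) + 1/2) =
      4^(m+1) * (((m)! :ℝ) * (((m+1))! :ℝ)) / (2 * (((2*(m+1)))! :ℝ)) := by
    have := erw_a_val m
    push_cast at this ⊢
    convert this using 3
  rw [← erw_stirling_id (m+1) (by omega), hav]
  have hm1 : (((m+1))! : ℝ) = ((m:ℝ)+1) * ((m)! : ℝ) := by
    rw [Nat.factorial_succ]; push_cast; ring
  have hB : (((2*(m+1)))! :ℝ) ≠ 0 := by
    exact_mod_cast (Nat.factorial_pos _).ne'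
  have hmpos : (0:ℝ) < (m:ℝ) + 1 := by positivity
  rw [show ((16:ℝ))^(m+1) = (4^(m+1))^2 from by
      rw [← pow_mul, mul_comm, pow_mul]; norm_num,
    hm1]
  push_cast
  field_simp
  ring

lemma erw_harmonic_eq (n : ℕ) :
    ∑ i ∈ Finset.range (n+1), 1/(i:ℝ) = (harmonic n : ℝ) := by
  rw [Finset.sum_range_succ']
  simp only [Nat.cast_zero, div_zero, add_zero]
  rw [harmonic]
  push_cast
  refine Finset.sum_congr rfl fun i _ => ?_
  rw [one_div]

/-- Critical regime `p = 3/4`: with `a_n = Γ(n)Γ(3/2)/Γ(n+1/2)` and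
`v_n = Σ_{k=1}^n a_k²`, we have `v_n / log n → π/4`. -/
theorem erw_vn_critical :
    Tendsto
      (fun n : ℕ =>
        (∑ k ∈ Finset.Icc 1 n,
            (Real.Gamma k * Real.Gamma (3 / 2) / Real.Gamma (k + 1 / 2)) ^ 2)
          / Real.log n)
      atTop (nhds (Real.pi / 4)) := by
  set b : ℕ → ℝ := fun k =>
    (Real.Gamma k * Real.Gamma (3 / 2) / Real.Gamma (k + 1 / 2)) ^ 2 with hbdef
  set g : ℕ → ℝ := fun i => 1/(i:ℝ) with hgdef
  set f : ℕ → ℝ := fun i => b i - (π/4) * g i with hfdef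
  have hb0 : b 0 = 0 := by simp [hbdef, Real.Gamma_zero]
  have hfg : f =o[atTop] g := by
    rw [Asymptotics.isLittleO_iff_tendsto']
    · have h0 : Tendsto (fun k : ℕ => (k:ℝ) * b k - π/4) atTop (𝓝 0) := by
        have h := erw_k_mul_sq_tendsto.sub_const (π/4)
        rw [sub_self] at h
        exact h
      apply h0.congr'
      filter_upwards [eventually_ge_atTop 1] with k hk
      have hkne : ((k:ℝ)) ≠ 0 := by
        simp only [ne_eq, Nat.cast_eq_zero]; omega
      simp only [hfdef, hgdef]
      field_simp
    · filter_upwards with k hgk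
      have hk0 : k = 0 := by
        by_contra h
        have : ((k:ℝ)) ≠ 0 := by simp only [ne_eq, Nat.cast_eq_zero]; omega
        simp [hgdef, this] at hgk
      simp [hfdef, hgdef, hk0, hb0]
  have hgnonneg : ∀ i, 0 ≤ g i := fun i => by positivity
  have hgsum : Tendsto (fun n => ∑ i ∈ Finset.range n, g i) atTop atTop := by
    rw [← tendsto_add_atTop_iff_nat 1]
    refine Real.tendsto_sum_range_one_div_nat_succ_atTop.congr fun n => ?_
    rw [Finset.sum_range_succ']
    simp [hgdef]
  have hsum := (hfg.sum_range hgnonneg hgsum).tendsto_div_nhds_zero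
  -- harmonic / log → 1
  have hHlog : Tendsto (fun n : ℕ => (∑ i ∈ Finset.range (n+1), g i) / Real.log n)
      atTop (𝓝 1) := by
    have h1 : Tendsto (fun n : ℕ => ((harmonic n : ℝ) - Real.log n)/Real.log n)
        atTop (𝓝 0) :=
      Real.tendsto_harmonic_sub_log.div_atTop
        (Real.tendsto_log_atTop.comp tendsto_natCast_atTop_atTop)
    have h2 : Tendsto (fun n : ℕ => ((harmonic n : ℝ) - Real.log n)/Real.log n + 1)
        atTop (𝓝 1) := by simpa using h1.add_const 1
    apply h2.congr'
    filter_upwards [eventually_ge_atTop 2] with n hn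
    have hlogpos : 0 < Real.log n :=
      Real.log_pos (by exact_mod_cast Nat.lt_of_lt_of_le one_lt_two hn)
    rw [erw_harmonic_eq]
    field_simp
    ring
  -- positivity of harmonic sums
  have hgpos : ∀ n : ℕ, 1 ≤ n → 0 < ∑ i ∈ Finset.range (n+1), g i := by
    intro n hn
    rw [erw_harmonic_eq]
    exact_mod_cast harmonic_pos (by omega)
  -- first piece tends to 0
  have hfirst : Tendsto (fun n : ℕ =>
      (∑ i ∈ Finset.range (n+1), f i) / Real.log n) atTop (𝓝 0) := by
    have hq : Tendsto (fun n : ℕ =>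
        (∑ i ∈ Finset.range (n+1), f i) / (∑ i ∈ Finset.range (n+1), g i))
        atTop (𝓝 0) := by
      have := hsum.comp (tendsto_add_atTop_nat 1)
      exact this
    have hprod := hq.mul hHlog
    rw [mul_one] at hprod
    apply hprod.congr'
    filter_upwards [eventually_ge_atTop 1] with n hn
    have hSg := (hgpos n hn).ne'
    rw [_root_.div_mul_div_comm, mul_comm (∑ i ∈ Finset.range (n+1), f i),
      _root_.mul_div_mul_left _ _ hSg]
  -- second piece tends to π/4
  have hsecond : Tendsto (fun n : ℕ =>
      (π/4) * ((∑ i ∈ Finset.range (n+1), g i) / Real.log n)) atTop (𝓝 (π/4)) := by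
    simpa using hHlog.const_mul (π/4)
  have htot := hfirst.add hsecond
  rw [zero_add] at htot
  apply htot.congr
  intro n
  have hins : Finset.range (n+1) = insert 0 (Finset.Icc 1 n) := by
    ext x
    simp [Nat.lt_succ_iff]
    omega
  have hsplit : ∑ k ∈ Finset.Icc 1 n, b k = ∑ i ∈ Finset.range (n+1), b i := by
    rw [hins, Finset.sum_insert (by simp), hb0, zero_add]
  calc (∑ i ∈ Finset.range (n+1), f i) / Real.log n
        + (π/4) * ((∑ i ∈ Finset.range (n+1), g i) / Real.log n)
      = (∑ i ∈ Finset.range (n+1), (f i + (π/4) * g i)) / Real.log n := by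
        rw [Finset.sum_add_distrib, ← Finset.mul_sum]
        ring
    _ = (∑ k ∈ Finset.Icc 1 n, b k) / Real.log n := by
        rw [hsplit]
        congr 1
        refine Finset.sum_congr rfl fun i _ => ?_
        simp [hfdef]
end

section
/- For the ERW with memory parameter p ∈ (1/2,1], the third moment satisfies the recursion E[S_{n+1}^3] = ((3n+α)/n) E[S_n] + ((n+3α)/n) E[S_n^3] with α = 2p-1, and for p ≠ 3/4 it has the closed form E[S_n^3] = (β/((2α-1)Γ(n))) · (3(α+1)Γ(n+3α)/Γ(3α+1) − (Γ(n+α)/Γ(α+1))(3n+α+1)), where β = 2q-1. -/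
open MeasureTheory ProbabilityTheory Real Finset

private lemma erw_integrable_of_bdd {Ω : Type*} [MeasurableSpace Ω] (μ : Measure Ω)
    [IsFiniteMeasure μ] {f : Ω → ℝ} (hf : Measurable f) (C : ℝ) (h : ∀ ω, ‖f ω‖ ≤ C) :
    Integrable f μ :=
  (integrable_const C).mono' hf.aestronglyMeasurable (Filter.Eventually.of_forall h)

/-- For the ERW with `p ∈ (1/2,1]`, writing `α = 2p-1` and `β = 2q-1`, the third moment
satisfies the recursion `E[S_{n+1}³] = ((3n+α)/n) E[S_n] + ((n+3α)/n) E[S_n³]`, and for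
`p ≠ 3/4` it has the closed form
`E[S_n³] = (β/((2α-1)Γ(n))) (3(α+1)Γ(n+3α)/Γ(3α+1) − (Γ(n+α)/Γ(α+1))(3n+α+1))`. -/
theorem erw_third_moment
    {Ω : Type*} [m0 : MeasurableSpace Ω] (μ : Measure Ω) [IsProbabilityMeasure μ]
    (p q : ℝ) (hp : p ∈ Set.Ioc (1 / 2 : ℝ) 1) (hq : q ∈ Set.Icc (0 : ℝ) 1)
    (ℱ : ℕ → MeasurableSpace Ω) (hℱ : ∀ n, ℱ n ≤ m0) (hmono : Monotone ℱ)
    (X : ℕ → Ω → ℝ)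
    (hadp : ∀ i, Measurable[ℱ i] (X i))
    (hpm : ∀ i ≥ 1, ∀ ω, X i ω = 1 ∨ X i ω = -1)
    (S : ℕ → Ω → ℝ) (hS : ∀ n ω, S n ω = ∑ k ∈ Finset.Icc 1 n, X k ω)
    (hCE : ∀ n ≥ 1, μ[X (n + 1) | ℱ n] =ᵐ[μ] fun ω => (2 * p - 1) * S n ω / n)
    (hmean1 : ∫ ω, X 1 ω ∂μ = 2 * q - 1) :
    (∀ n ≥ 1,
      ∫ ω, (S (n + 1) ω) ^ 3 ∂μ
        = ((3 * (n : ℝ) + (2 * p - 1)) / n) * ∫ ω, S n ω ∂μ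
          + (((n : ℝ) + 3 * (2 * p - 1)) / n) * ∫ ω, (S n ω) ^ 3 ∂μ)
    ∧ (p ≠ 3 / 4 → ∀ n ≥ 1,
        ∫ ω, (S n ω) ^ 3 ∂μ
          = ((2 * q - 1) / ((2 * (2 * p - 1) - 1) * Real.Gamma n))
              * (3 * ((2 * p - 1) + 1) * Real.Gamma (n + 3 * (2 * p - 1))
                    / Real.Gamma (3 * (2 * p - 1) + 1)
                 - (Real.Gamma (n + (2 * p - 1)) / Real.Gamma ((2 * p - 1) + 1))
                    * (3 * (n : ℝ) + (2 * p - 1) + 1))) := by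
  set α : ℝ := 2 * p - 1 with hα_def
  set β : ℝ := 2 * q - 1 with hβ_def
  have hα0 : 0 < α := by simp only [hα_def]; linarith [hp.1]
  have hα1 : α ≤ 1 := by simp only [hα_def]; linarith [hp.2]
  -- basic measurability
  have hXm : ∀ i, Measurable (X i) := fun i => (hadp i).mono (hℱ i) le_rfl
  have hSF : ∀ n, Measurable[ℱ n] (S n) := by
    intro n
    have : S n = fun ω => ∑ k ∈ Finset.Icc 1 n, X k ω := funext (hS n)
    rw [this]
    exact Finset.measurable_sum _ fun k hk =>
      (hadp k).mono (hmono (Finset.mem_Icc.mp hk).2) le_rfl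
  have hSm : ∀ n, Measurable (S n) := fun n => (hSF n).mono (hℱ n) le_rfl
  -- bounds
  have hXb : ∀ i, 1 ≤ i → ∀ ω, ‖X i ω‖ ≤ 1 := by
    intro i hi ω
    rcases hpm i hi ω with h | h <;> rw [h] <;> simp
  have hSb : ∀ n ω, ‖S n ω‖ ≤ n := by
    intro n ω
    rw [hS n ω]
    calc ‖∑ k ∈ Finset.Icc 1 n, X k ω‖ ≤ ∑ k ∈ Finset.Icc 1 n, ‖X k ω‖ :=
          norm_sum_le _ _
      _ ≤ ∑ k ∈ Finset.Icc 1 n, 1 := Finset.sum_le_sum fun k hk =>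
          hXb k (Finset.mem_Icc.mp hk).1 ω
      _ ≤ n := by simp [Nat.card_Icc]
  -- integrability
  have hintS : ∀ n, Integrable (S n) μ :=
    fun n => erw_integrable_of_bdd μ (hSm n) n (hSb n)
  have hintS3 : ∀ n, Integrable (fun ω => S n ω ^ 3) μ := by
    intro n
    refine erw_integrable_of_bdd μ ((hSm n).pow_const 3) ((n : ℝ) ^ 3) fun ω => ?_
    rw [norm_pow]
    exact pow_le_pow_left₀ (norm_nonneg _) (hSb n ω) 3
  have hintX : ∀ i, 1 ≤ i → Integrable (X i) μ :=
    fun i hi => erw_integrable_of_bdd μ (hXm i) 1 (hXb i hi)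
  have hintS2X : ∀ n, Integrable (fun ω => S n ω ^ 2 * X (n + 1) ω) μ := by
    intro n
    refine erw_integrable_of_bdd μ (((hSm n).pow_const 2).mul (hXm (n+1))) ((n : ℝ) ^ 2)
      fun ω => ?_
    rw [norm_mul, norm_pow]
    calc ‖S n ω‖ ^ 2 * ‖X (n+1) ω‖ ≤ (n : ℝ) ^ 2 * 1 := by
          apply mul_le_mul (pow_le_pow_left₀ (norm_nonneg _) (hSb n ω) 2)
            (hXb (n+1) (by omega) ω) (norm_nonneg _) (by positivity)
      _ = (n : ℝ) ^ 2 := mul_one _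
  -- key pull-out identity
  have key : ∀ n, 1 ≤ n → ∀ f : Ω → ℝ, StronglyMeasurable[ℱ n] f →
      Integrable (fun ω => f ω * X (n + 1) ω) μ →
      Integrable (fun ω => f ω * S n ω) μ →
      ∫ ω, f ω * X (n + 1) ω ∂μ = (α / n) * ∫ ω, f ω * S n ω ∂μ := by
    intro n hn f hfm hfX hfS
    haveI : SigmaFinite (μ.trim (hℱ n)) := inferInstance
    have h1 : ∫ ω, f ω * X (n + 1) ω ∂μ
        = ∫ ω, (μ[(fun ω => f ω * X (n + 1) ω) | ℱ n]) ω ∂μ :=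
      (integral_condExp (hℱ n)).symm
    have h2 : μ[(fun ω => f ω * X (n + 1) ω) | ℱ n]
        =ᵐ[μ] fun ω => f ω * (α * S n ω / n) := by
      have hmul := condExp_mul_of_stronglyMeasurable_left (μ := μ) (m := ℱ n) hfm hfX
        (hintX (n+1) (by omega))
      refine hmul.trans ?_
      filter_upwards [hCE n hn] with ω hω
      simp only [Pi.mul_apply, hω]
    rw [h1, integral_congr_ae h2]
    have h3 : ∀ ω, f ω * (α * S n ω / n) = (α / n) * (f ω * S n ω) := by
      intro ω; ring
    simp_rw [h3]
    exact integral_const_mul _ _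
  -- decomposition S (n+1) = S n + X (n+1)
  have hdec : ∀ n, 1 ≤ n → ∀ ω, S (n + 1) ω = S n ω + X (n + 1) ω := by
    intro n hn ω
    rw [hS (n+1) ω, hS n ω, ← Finset.sum_Icc_succ_top (by omega : 1 ≤ n + 1)]
  -- mean of X (n+1)
  have hXmean : ∀ n, 1 ≤ n → ∫ ω, X (n + 1) ω ∂μ = (α / n) * ∫ ω, S n ω ∂μ := by
    intro n hn
    have := key n hn (fun _ => 1) stronglyMeasurable_const
      (by simpa using hintX (n+1) (by omega)) (by simpa using hintS n)
    simpa using this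
  -- mean recursion and closed form
  have hS1 : ∀ ω, S 1 ω = X 1 ω := by
    intro ω; rw [hS 1 ω]; simp
  have hmeanS1 : ∫ ω, S 1 ω ∂μ = β := by
    simp_rw [hS1]; exact hmean1
  have hmeanrec : ∀ n, 1 ≤ n →
      ∫ ω, S (n + 1) ω ∂μ = (((n : ℝ) + α) / n) * ∫ ω, S n ω ∂μ := by
    intro n hn
    have h1 : ∫ ω, S (n + 1) ω ∂μ = ∫ ω, (S n ω + X (n + 1) ω) ∂μ :=
      integral_congr_ae (Filter.Eventually.of_forall (hdec n hn))
    rw [h1, integral_add (hintS n) (hintX (n+1) (by omega)), hXmean n hn]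
    have hn0 : (n : ℝ) ≠ 0 := Nat.cast_ne_zero.mpr (by omega)
    field_simp
  have hGpos : ∀ x : ℝ, 0 < x → 0 < Real.Gamma x := fun x hx => Real.Gamma_pos_of_pos hx
  have hmean : ∀ n, 1 ≤ n →
      ∫ ω, S n ω ∂μ = β * Real.Gamma (n + α) / (Real.Gamma n * Real.Gamma (α + 1)) := by
    intro n hn
    induction n, hn using Nat.le_induction with
    | base =>
      rw [hmeanS1]
      have : Real.Gamma ((1 : ℕ) + α) = Real.Gamma (α + 1) := by
        norm_num [add_comm]
      rw [this]
      have h1 : Real.Gamma ((1 : ℕ) : ℝ) = 1 := by norm_num [Real.Gamma_one]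
      rw [h1]
      have hne : Real.Gamma (α + 1) ≠ 0 := (hGpos _ (by linarith)).ne'
      field_simp
    | succ n hn ih =>
      rw [hmeanrec n hn, ih]
      have hn0 : (n : ℝ) ≠ 0 := Nat.cast_ne_zero.mpr (by omega)
      have hnpos : (0 : ℝ) < n := by positivity
      have hg1 : Real.Gamma ((n + 1 : ℕ) : ℝ) = n * Real.Gamma n := by
        push_cast
        rw [Real.Gamma_add_one hn0]
      have hg2 : Real.Gamma (((n + 1 : ℕ) : ℝ) + α) = ((n : ℝ) + α) * Real.Gamma (n + α) := by
        push_cast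
        rw [show (n : ℝ) + 1 + α = ((n : ℝ) + α) + 1 by ring,
          Real.Gamma_add_one (by positivity)]
      rw [hg1, hg2]
      have hGn : Real.Gamma (n : ℝ) ≠ 0 := (hGpos _ hnpos).ne'
      have hGa : Real.Gamma (α + 1) ≠ 0 := (hGpos _ (by linarith)).ne'
      field_simp
  -- third power pointwise identity
  have hcube : ∀ n, 1 ≤ n → ∀ ω,
      S (n + 1) ω ^ 3 = S n ω ^ 3 + 3 * (S n ω ^ 2 * X (n + 1) ω)
        + 3 * S n ω + X (n + 1) ω := by
    intro n hn ω
    rw [hdec n hn ω]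
    rcases hpm (n + 1) (by omega) ω with h | h <;> rw [h] <;> ring
  -- the recursion for third moments
  have hrec : ∀ n, 1 ≤ n →
      ∫ ω, (S (n + 1) ω) ^ 3 ∂μ
        = ((3 * (n : ℝ) + α) / n) * ∫ ω, S n ω ∂μ
          + (((n : ℝ) + 3 * α) / n) * ∫ ω, (S n ω) ^ 3 ∂μ := by
    intro n hn
    have hn0 : (n : ℝ) ≠ 0 := Nat.cast_ne_zero.mpr (by omega)
    have h1 : ∫ ω, (S (n + 1) ω) ^ 3 ∂μ
        = ∫ ω, (S n ω ^ 3 + 3 * (S n ω ^ 2 * X (n + 1) ω) + 3 * S n ω + X (n + 1) ω) ∂μ :=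
      integral_congr_ae (Filter.Eventually.of_forall (hcube n hn))
    have I2 : Integrable (fun ω => 3 * (S n ω ^ 2 * X (n + 1) ω)) μ :=
      (hintS2X n).const_mul 3
    have I3 : Integrable (fun ω => 3 * S n ω) μ := (hintS n).const_mul 3
    have I12 : Integrable (fun ω => S n ω ^ 3 + 3 * (S n ω ^ 2 * X (n + 1) ω)) μ :=
      (hintS3 n).add I2
    have I123 : Integrable
        (fun ω => S n ω ^ 3 + 3 * (S n ω ^ 2 * X (n + 1) ω) + 3 * S n ω) μ := I12.add I3
    rw [h1]
    rw [integral_add I123 (hintX (n+1) (by omega)), integral_add I12 I3,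
      integral_add (hintS3 n) I2, integral_const_mul, integral_const_mul]
    have hkey2 : ∫ ω, S n ω ^ 2 * X (n + 1) ω ∂μ = (α / n) * ∫ ω, (S n ω) ^ 3 ∂μ := by
      have hint3' : Integrable (fun ω => S n ω ^ 2 * S n ω) μ := by
        have : (fun ω => S n ω ^ 2 * S n ω) = fun ω => S n ω ^ 3 := by
          funext ω; ring
        rw [this]; exact hintS3 n
      have := key n hn (fun ω => S n ω ^ 2) ((hSF n).pow_const 2).stronglyMeasurable
        (hintS2X n) hint3'
      rw [this]
      congr 1
    rw [hkey2, hXmean n hn]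
    field_simp
    ring
  constructor
  · exact fun n hn => hrec n hn
  · intro hp34 n hn
    have h2α1 : 2 * α - 1 ≠ 0 := by
      simp only [hα_def]
      intro h
      apply hp34
      linarith
    have hGa : Real.Gamma (α + 1) ≠ 0 := (hGpos _ (by linarith)).ne'
    have hG3a : Real.Gamma (3 * α + 1) ≠ 0 := (hGpos _ (by linarith)).ne'
    induction n, hn using Nat.le_induction with
    | base =>
      have hX13 : ∀ ω, X 1 ω ^ 3 = X 1 ω := by
        intro ω; rcases hpm 1 le_rfl ω with h | h <;> rw [h] <;> ring
      have hb1 : ∫ ω, (S 1 ω) ^ 3 ∂μ = β := by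
        have : ∀ ω, (S 1 ω) ^ 3 = X 1 ω := fun ω => by rw [hS1 ω, hX13 ω]
        simp_rw [this]; exact hmean1
      rw [hb1]
      have h1 : Real.Gamma ((1 : ℕ) : ℝ) = 1 := by norm_num [Real.Gamma_one]
      have h2 : Real.Gamma (((1 : ℕ) : ℝ) + 3 * α) = Real.Gamma (3 * α + 1) := by
        norm_num [add_comm]
      have h3 : Real.Gamma (((1 : ℕ) : ℝ) + α) = Real.Gamma (α + 1) := by
        norm_num [add_comm]
      rw [h1, h2, h3]
      have h4 : ((1 : ℕ) : ℝ) = 1 := by norm_num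
      rw [h4, mul_div_assoc, div_self hG3a, div_self hGa, mul_one]
      have h5 : 3 * (α + 1) * 1 - 1 * (3 * (1:ℝ) + α + 1) = 2 * α - 1 := by ring
      rw [h5, div_mul_cancel₀ _ h2α1]
    | succ n hn ih =>
      have hn0 : (n : ℝ) ≠ 0 := Nat.cast_ne_zero.mpr (by omega)
      have hnpos : (0 : ℝ) < n := by positivity
      have hGn : Real.Gamma (n : ℝ) ≠ 0 := (hGpos _ hnpos).ne'
      rw [hrec n hn, ih, hmean n hn]
      have hg1 : Real.Gamma ((n + 1 : ℕ) : ℝ) = n * Real.Gamma n := by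
        push_cast; rw [Real.Gamma_add_one hn0]
      have hg2 : Real.Gamma (((n + 1 : ℕ) : ℝ) + 3 * α)
          = ((n : ℝ) + 3 * α) * Real.Gamma (n + 3 * α) := by
        push_cast
        rw [show (n : ℝ) + 1 + 3 * α = ((n : ℝ) + 3 * α) + 1 by ring,
          Real.Gamma_add_one (by positivity)]
      have hg3 : Real.Gamma (((n + 1 : ℕ) : ℝ) + α)
          = ((n : ℝ) + α) * Real.Gamma (n + α) := by
        push_cast
        rw [show (n : ℝ) + 1 + α = ((n : ℝ) + α) + 1 by ring,
          Real.Gamma_add_one (by positivity)]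
      rw [hg1, hg2, hg3]
      push_cast
      apply mul_left_cancel₀ h2α1
      field_simp
      ring
end

section
/- In the superdiffusive regime 3/4 < p ≤ 1, the martingale M_n = a_n S_n is bounded in L^2: sup_{n≥1} E[M_n^2] ≤ ₃F₂(1,1,1; 2p,2p; 1) < ∞. More precisely, E[M_n^2] ≤ Σ_{k=1}^n a_k^2 for every n. -/
open MeasureTheory ProbabilityTheory Real Finset

/-- Log-convexity bound: `Γ(k+1)/Γ(k+1+s) ≤ k^(-s)` for `0 < s ≤ 1`, `k ≥ 1`. -/
lemma gamma_ratio_le_rpow (s : ℝ) (hs0 : 0 < s) (hs1 : s ≤ 1) (k : ℕ) (hk : 1 ≤ k) :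
    Real.Gamma ((k : ℝ) + 1) / Real.Gamma ((k : ℝ) + 1 + s) ≤ (k : ℝ) ^ (-s) := by
  have hk1 : (1 : ℝ) ≤ (k : ℝ) := by exact_mod_cast hk
  have hkpos : (0 : ℝ) < (k : ℝ) := by linarith
  have hks : (0 : ℝ) < (k : ℝ) + s := by linarith
  have hk1s : (0 : ℝ) < (k : ℝ) + 1 + s := by linarith
  have hGks : 0 < Real.Gamma ((k : ℝ) + s) := Real.Gamma_pos_of_pos hks
  have hGk1s : 0 < Real.Gamma ((k : ℝ) + 1 + s) := Real.Gamma_pos_of_pos hk1s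
  have hGk1 : 0 < Real.Gamma ((k : ℝ) + 1) := Real.Gamma_pos_of_pos (by linarith)
  -- log-convexity at the convex combination s•(k+s) + (1-s)•(k+1+s) = k+1
  have hconv := convexOn_log_Gamma.2 (Set.mem_Ioi.mpr hks) (Set.mem_Ioi.mpr hk1s)
    hs0.le (by linarith : (0:ℝ) ≤ 1 - s) (by ring)
  have hcomb : s • ((k : ℝ) + s) + (1 - s) • ((k : ℝ) + 1 + s) = (k : ℝ) + 1 := by
    simp only [smul_eq_mul]; ring
  rw [hcomb] at hconv
  simp only [Function.comp_apply, smul_eq_mul] at hconv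
  -- Γ(k+1+s) = (k+s) Γ(k+s)
  have hrec : Real.Gamma ((k : ℝ) + 1 + s) = ((k : ℝ) + s) * Real.Gamma ((k : ℝ) + s) := by
    have h : (k : ℝ) + 1 + s = ((k : ℝ) + s) + 1 := by ring
    rw [h, Real.Gamma_add_one hks.ne']
  have hlog : Real.log (Real.Gamma ((k : ℝ) + 1 + s))
      = Real.log ((k : ℝ) + s) + Real.log (Real.Gamma ((k : ℝ) + s)) := by
    rw [hrec, Real.log_mul hks.ne' hGks.ne']
  have key : Real.log (Real.Gamma ((k : ℝ) + 1))
      ≤ Real.log (Real.Gamma ((k : ℝ) + 1 + s)) - s * Real.log ((k : ℝ) + s) := by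
    have := hconv
    nlinarith [hlog]
  -- exponentiate
  have h1 : Real.Gamma ((k : ℝ) + 1) ≤ Real.Gamma ((k : ℝ) + 1 + s) * ((k : ℝ) + s) ^ (-s) := by
    have := Real.exp_le_exp.mpr key
    rw [Real.exp_log hGk1] at this
    rw [Real.exp_sub, Real.exp_log hGk1s] at this
    have hrw : Real.exp (s * Real.log ((k : ℝ) + s)) = ((k : ℝ) + s) ^ s := by
      rw [Real.rpow_def_of_pos hks, mul_comm]
    rw [hrw] at this
    calc Real.Gamma ((k : ℝ) + 1)
        ≤ Real.Gamma ((k : ℝ) + 1 + s) / ((k : ℝ) + s) ^ s := this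
      _ = Real.Gamma ((k : ℝ) + 1 + s) * ((k : ℝ) + s) ^ (-s) := by
          rw [Real.rpow_neg hks.le, div_eq_mul_inv]
  have h2 : ((k : ℝ) + s) ^ (-s) ≤ (k : ℝ) ^ (-s) := by
    rw [Real.rpow_neg hks.le, Real.rpow_neg hkpos.le]
    have hb : (k : ℝ) ^ s ≤ ((k : ℝ) + s) ^ s :=
      Real.rpow_le_rpow hkpos.le (by linarith) hs0.le
    have hkspos : (0 : ℝ) < (k : ℝ) ^ s := Real.rpow_pos_of_pos hkpos s
    exact inv_anti₀ hkspos hb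
  rw [div_le_iff₀ hGk1s]
  calc Real.Gamma ((k : ℝ) + 1) ≤ Real.Gamma ((k : ℝ) + 1 + s) * ((k : ℝ) + s) ^ (-s) := h1
    _ ≤ Real.Gamma ((k : ℝ) + 1 + s) * (k : ℝ) ^ (-s) :=
        mul_le_mul_of_nonneg_left h2 hGk1s.le
    _ = (k : ℝ) ^ (-s) * Real.Gamma ((k : ℝ) + 1 + s) := mul_comm _ _

/-- Superdiffusive regime `3/4 < p ≤ 1`: the martingale `M_n = a_n S_n` is bounded in `L²`:
`E[M_n²] ≤ Σ_{k=1}^n a_k²` for every `n ≥ 1`, and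
`sup_{n≥1} E[M_n²] ≤ ₃F₂(1,1,1;2p,2p;1) = Σ_{k≥0} (Γ(k+1)Γ(2p)/Γ(k+2p))² < ∞`. -/
theorem erw_L2_bounded
    {Ω : Type*} [m0 : MeasurableSpace Ω] (μ : Measure Ω) [IsProbabilityMeasure μ]
    (p : ℝ) (hp : p ∈ Set.Ioc (3 / 4 : ℝ) 1)
    (ℱ : ℕ → MeasurableSpace Ω) (hℱ : ∀ n, ℱ n ≤ m0) (hmono : Monotone ℱ)
    (X : ℕ → Ω → ℝ)
    (hadp : ∀ i, Measurable[ℱ i] (X i))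
    (hpm : ∀ i ≥ 1, ∀ ω, X i ω = 1 ∨ X i ω = -1)
    (S : ℕ → Ω → ℝ) (hS : ∀ n ω, S n ω = ∑ k ∈ Finset.Icc 1 n, X k ω)
    (hCE : ∀ n ≥ 1, μ[X (n + 1) | ℱ n] =ᵐ[μ] fun ω => (2 * p - 1) * S n ω / n)
    (a : ℕ → ℝ)
    (ha : ∀ n ≥ 1, a n = Real.Gamma n * Real.Gamma (2 * p) / Real.Gamma (n + 2 * p - 1))
    (M : ℕ → Ω → ℝ) (hM : ∀ n ω, M n ω = a n * S n ω) :
    (∀ n ≥ 1, ∫ ω, (M n ω) ^ 2 ∂μ ≤ ∑ k ∈ Finset.Icc 1 n, (a k) ^ 2)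
    ∧ Summable (fun k : ℕ =>
        (Real.Gamma (k + 1) * Real.Gamma (2 * p) / Real.Gamma (k + 2 * p)) ^ 2)
    ∧ (∀ n ≥ 1, ∫ ω, (M n ω) ^ 2 ∂μ
        ≤ ∑' k : ℕ,
            (Real.Gamma (k + 1) * Real.Gamma (2 * p) / Real.Gamma (k + 2 * p)) ^ 2) := by
  obtain ⟨hp34, hp1⟩ := hp
  set s : ℝ := 2 * p - 1 with hs_def
  have hs0 : (0 : ℝ) < s := by simp only [hs_def]; linarith
  have hs1 : s ≤ 1 := by simp only [hs_def]; linarith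
  have hs12 : (1 : ℝ) / 2 < s := by simp only [hs_def]; linarith
  have hG2p : 0 < Real.Gamma (2 * p) := Real.Gamma_pos_of_pos (by linarith)
  -- basic measurability and bounds
  have hXmeas : ∀ i, Measurable (X i) := fun i => (hadp i).mono (hℱ i) le_rfl
  have hXbd : ∀ i, 1 ≤ i → ∀ ω, |X i ω| ≤ 1 := by
    intro i hi ω
    rcases hpm i hi ω with h | h <;> rw [h] <;> norm_num
  have hSmeas : ∀ n, Measurable (S n) := by
    intro n
    have : S n = fun ω => ∑ k ∈ Finset.Icc 1 n, X k ω := funext (hS n)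
    rw [this]
    exact Finset.measurable_sum _ fun k _ => hXmeas k
  have hSmeasF : ∀ n, Measurable[ℱ n] (S n) := by
    intro n
    have : S n = fun ω => ∑ k ∈ Finset.Icc 1 n, X k ω := funext (hS n)
    rw [this]
    exact Finset.measurable_sum _ fun k hk =>
      (hadp k).mono (hmono (Finset.mem_Icc.mp hk).2) le_rfl
  have hSbd : ∀ n ω, |S n ω| ≤ (n : ℝ) := by
    intro n ω
    rw [hS]
    calc |∑ k ∈ Finset.Icc 1 n, X k ω| ≤ ∑ k ∈ Finset.Icc 1 n, |X k ω| :=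
          Finset.abs_sum_le_sum_abs _ _
      _ ≤ ∑ k ∈ Finset.Icc 1 n, (1 : ℝ) :=
          Finset.sum_le_sum fun k hk => hXbd k (Finset.mem_Icc.mp hk).1 ω
      _ = (n : ℝ) := by simp [Nat.card_Icc]
  have hint : ∀ (f : Ω → ℝ) (C : ℝ), Measurable f → (∀ ω, |f ω| ≤ C) → Integrable f μ := by
    intro f C hf hb
    exact (integrable_const C).mono' hf.aestronglyMeasurable
      (Filter.Eventually.of_forall fun ω => by simpa using hb ω)
  -- E[M_m²] = a_m² E[S_m²]
  have hMsq : ∀ m, ∫ ω, M m ω ^ 2 ∂μ = a m ^ 2 * ∫ ω, S m ω ^ 2 ∂μ := by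
    intro m
    have h : ∀ ω, M m ω ^ 2 = a m ^ 2 * S m ω ^ 2 := fun ω => by rw [hM]; ring
    simp_rw [h]
    exact integral_const_mul _ _
  have hintS2 : ∀ n, Integrable (fun ω => S n ω ^ 2) μ := by
    intro n
    refine hint _ ((n : ℝ) ^ 2) ((hSmeas n).pow_const 2) fun ω => ?_
    rw [abs_pow]
    exact pow_le_pow_left₀ (abs_nonneg _) (hSbd n ω) 2
  have hS2nonneg : ∀ n, 0 ≤ ∫ ω, S n ω ^ 2 ∂μ := fun n =>
    integral_nonneg fun ω => sq_nonneg _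
  -- key recursion step
  have hstep : ∀ n, 1 ≤ n →
      ∫ ω, M (n + 1) ω ^ 2 ∂μ ≤ ∫ ω, M n ω ^ 2 ∂μ + a (n + 1) ^ 2 := by
    intro n hn
    have hn1 : (1 : ℝ) ≤ (n : ℝ) := by exact_mod_cast hn
    have hnpos : (0 : ℝ) < (n : ℝ) := by linarith
    have hintX : Integrable (X (n + 1)) μ :=
      hint _ 1 (hXmeas _) (hXbd _ (by omega))
    have hintSX : Integrable (fun ω => S n ω * X (n + 1) ω) μ := by
      refine hint _ (n : ℝ) ((hSmeas n).mul (hXmeas _)) fun ω => ?_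
      rw [abs_mul]
      calc |S n ω| * |X (n + 1) ω| ≤ (n : ℝ) * 1 :=
            mul_le_mul (hSbd n ω) (hXbd _ (by omega) ω) (abs_nonneg _) hnpos.le
        _ = (n : ℝ) := mul_one _
    haveI : SigmaFinite (μ.trim (hℱ n)) := by
      have : IsFiniteMeasure (μ.trim (hℱ n)) := isFiniteMeasure_trim (hℱ n)
      infer_instance
    -- cross term
    have hcross : ∫ ω, S n ω * X (n + 1) ω ∂μ
        = (2 * p - 1) / (n : ℝ) * ∫ ω, S n ω ^ 2 ∂μ := by
      have h1 : ∫ ω, (μ[(fun ω => S n ω * X (n + 1) ω)|ℱ n]) ω ∂μ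
          = ∫ ω, S n ω * X (n + 1) ω ∂μ := integral_condExp (hℱ n)
      have h2 : μ[(fun ω => S n ω * X (n + 1) ω)|ℱ n]
          =ᵐ[μ] (S n) * μ[X (n + 1)|ℱ n] := by
        have := condExp_mul_of_stronglyMeasurable_left (μ := μ) (m := ℱ n)
          (hSmeasF n).stronglyMeasurable (f := S n) (g := X (n + 1)) ?_ hintX
        · exact this
        · exact hintSX
      have h3 : (S n) * μ[X (n + 1)|ℱ n]
          =ᵐ[μ] fun ω => (2 * p - 1) / (n : ℝ) * S n ω ^ 2 := by
        filter_upwards [hCE n hn] with ω hω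
        simp only [Pi.mul_apply, hω]
        ring
      rw [← h1, integral_congr_ae (h2.trans h3), integral_const_mul]
    -- pointwise expansion of S_{n+1}²
    have hexp : ∀ ω, S (n + 1) ω ^ 2
        = S n ω ^ 2 + 2 * (S n ω * X (n + 1) ω) + 1 := by
      intro ω
      have hsum : S (n + 1) ω = S n ω + X (n + 1) ω := by
        rw [hS, hS, Finset.sum_Icc_succ_top (by omega : 1 ≤ n + 1)]
      have hX2 : X (n + 1) ω ^ 2 = 1 := by
        rcases hpm (n + 1) (by omega) ω with h | h <;> rw [h] <;> norm_num
      rw [hsum]; nlinarith [hX2]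
    have hSsq : ∫ ω, S (n + 1) ω ^ 2 ∂μ
        = (1 + 2 * ((2 * p - 1) / (n : ℝ))) * ∫ ω, S n ω ^ 2 ∂μ + 1 := by
      have : (fun ω => S (n + 1) ω ^ 2)
          = fun ω => S n ω ^ 2 + 2 * (S n ω * X (n + 1) ω) + 1 := funext hexp
      have hi1 : Integrable (fun ω => S n ω ^ 2 + 2 * (S n ω * X (n + 1) ω)) μ :=
        (hintS2 n).add (hintSX.const_mul 2)
      have e1 : ∫ ω, (S n ω ^ 2 + 2 * (S n ω * X (n + 1) ω)) + 1 ∂μ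
          = (∫ ω, S n ω ^ 2 + 2 * (S n ω * X (n + 1) ω) ∂μ) + ∫ _ω, (1 : ℝ) ∂μ :=
        integral_add hi1 (integrable_const 1)
      have e2 : ∫ ω, S n ω ^ 2 + 2 * (S n ω * X (n + 1) ω) ∂μ
          = (∫ ω, S n ω ^ 2 ∂μ) + ∫ ω, 2 * (S n ω * X (n + 1) ω) ∂μ :=
        integral_add (hintS2 n) (hintSX.const_mul 2)
      have e3 : ∫ ω, 2 * (S n ω * X (n + 1) ω) ∂μ
          = 2 * ∫ ω, S n ω * X (n + 1) ω ∂μ := integral_const_mul _ _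
      rw [this, e1, e2, e3, hcross]
      simp [measure_univ]
      ring
    -- a-recursion: a(n+1) (n + 2p - 1) = a(n) n
    have hG_pos : 0 < Real.Gamma ((n : ℝ) + 2 * p - 1) :=
      Real.Gamma_pos_of_pos (by linarith)
    have hrec : a (n + 1) * ((n : ℝ) + 2 * p - 1) = a n * (n : ℝ) := by
      rw [ha n hn, ha (n + 1) (by omega)]
      push_cast
      have h1 : Real.Gamma ((n : ℝ) + 1) = (n : ℝ) * Real.Gamma n := by
        rw [Real.Gamma_add_one hnpos.ne']
      have h2 : Real.Gamma ((n : ℝ) + 1 + 2 * p - 1)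
          = ((n : ℝ) + 2 * p - 1) * Real.Gamma ((n : ℝ) + 2 * p - 1) := by
        have he : (n : ℝ) + 1 + 2 * p - 1 = ((n : ℝ) + 2 * p - 1) + 1 := by ring
        rw [he, Real.Gamma_add_one (by linarith : (n : ℝ) + 2 * p - 1 ≠ 0)]
      have hx : (n : ℝ) + 2 * p - 1 ≠ 0 := ne_of_gt (by linarith)
      rw [h1, h2]
      field_simp
    have key2 : a (n + 1) ^ 2 * (1 + 2 * ((2 * p - 1) / (n : ℝ))) ≤ a n ^ 2 := by
      have e : (a (n + 1) * ((n : ℝ) + 2 * p - 1)) ^ 2 = (a n * (n : ℝ)) ^ 2 := by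
        rw [hrec]
      have h : a (n + 1) ^ 2 * (1 + 2 * ((2 * p - 1) / (n : ℝ))) * (n : ℝ) ^ 2
          ≤ a n ^ 2 * (n : ℝ) ^ 2 := by
        have hd : (1 + 2 * ((2 * p - 1) / (n : ℝ))) * (n : ℝ) ^ 2
            = (n : ℝ) ^ 2 + 2 * (2 * p - 1) * (n : ℝ) := by
          field_simp
        rw [mul_assoc, hd]
        nlinarith [sq_nonneg (a (n + 1) * (2 * p - 1)), e]
      exact le_of_mul_le_mul_right h (by positivity)
    -- combine
    calc ∫ ω, M (n + 1) ω ^ 2 ∂μ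
        = a (n + 1) ^ 2 * ((1 + 2 * ((2 * p - 1) / (n : ℝ))) * ∫ ω, S n ω ^ 2 ∂μ + 1) := by
          rw [hMsq (n + 1), hSsq]
      _ = a (n + 1) ^ 2 * (1 + 2 * ((2 * p - 1) / (n : ℝ))) * (∫ ω, S n ω ^ 2 ∂μ)
          + a (n + 1) ^ 2 := by ring
      _ ≤ a n ^ 2 * ∫ ω, S n ω ^ 2 ∂μ + a (n + 1) ^ 2 := by
          have := mul_le_mul_of_nonneg_right key2 (hS2nonneg n)
          linarith
      _ = ∫ ω, M n ω ^ 2 ∂μ + a (n + 1) ^ 2 := by rw [hMsq n]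
  -- Part 1 by induction
  have part1 : ∀ n ≥ 1, ∫ ω, (M n ω) ^ 2 ∂μ ≤ ∑ k ∈ Finset.Icc 1 n, (a k) ^ 2 := by
    intro n hn
    induction n, hn using Nat.le_induction with
    | base =>
      have hbase : ∀ ω, M 1 ω ^ 2 = a 1 ^ 2 := by
        intro ω
        have hS1 : S 1 ω = X 1 ω := by rw [hS]; simp
        have hX2 : X 1 ω ^ 2 = 1 := by
          rcases hpm 1 le_rfl ω with h | h <;> rw [h] <;> norm_num
        rw [hM, hS1]; nlinarith [hX2]
      simp_rw [hbase]
      simp [measure_univ]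
    | succ n hn ih =>
      calc ∫ ω, M (n + 1) ω ^ 2 ∂μ ≤ ∫ ω, M n ω ^ 2 ∂μ + a (n + 1) ^ 2 := hstep n hn
        _ ≤ (∑ k ∈ Finset.Icc 1 n, (a k) ^ 2) + a (n + 1) ^ 2 := by linarith
        _ = ∑ k ∈ Finset.Icc 1 (n + 1), (a k) ^ 2 :=
            (Finset.sum_Icc_succ_top (by omega : 1 ≤ n + 1) _).symm
  -- the summand and its bound
  set f : ℕ → ℝ := fun k =>
    (Real.Gamma (k + 1) * Real.Gamma (2 * p) / Real.Gamma (k + 2 * p)) ^ 2 with hf_def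
  have hfnonneg : ∀ k, 0 ≤ f k := fun k => sq_nonneg _
  have hfbound : ∀ k : ℕ, 1 ≤ k → f k ≤ Real.Gamma (2 * p) ^ 2 * ((k : ℝ) ^ (-s)) ^ 2 := by
    intro k hk
    have hratio := gamma_ratio_le_rpow s hs0 hs1 k hk
    have h2p : (k : ℝ) + 2 * p = (k : ℝ) + 1 + s := by simp only [hs_def]; ring
    have hGk2p : 0 < Real.Gamma ((k : ℝ) + 2 * p) := by
      rw [h2p]
      exact Real.Gamma_pos_of_pos (by positivity)
    have hre : Real.Gamma (k + 1) * Real.Gamma (2 * p) / Real.Gamma (k + 2 * p)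
        = Real.Gamma (2 * p) * (Real.Gamma ((k : ℝ) + 1) / Real.Gamma ((k : ℝ) + 1 + s)) := by
      rw [← h2p]; ring
    have hnn : 0 ≤ Real.Gamma ((k : ℝ) + 1) / Real.Gamma ((k : ℝ) + 1 + s) := by
      rw [← h2p]
      positivity
    simp only [hf_def]
    rw [hre, mul_pow]
    refine mul_le_mul_of_nonneg_left ?_ (sq_nonneg _)
    exact pow_le_pow_left₀ hnn hratio 2
  -- summability
  have hsum_aux : Summable (fun k : ℕ => ((k : ℝ) : ℝ) ^ (-(2 * s))) :=
    Real.summable_nat_rpow.mpr (by linarith)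
  have hsummable : Summable f := by
    rw [← summable_nat_add_iff 1]
    have hsum2 : Summable (fun k : ℕ =>
        Real.Gamma (2 * p) ^ 2 * (((k + 1 : ℕ) : ℝ) ^ (-(2 * s)))) := by
      exact ((summable_nat_add_iff 1).mpr hsum_aux).mul_left _
    refine Summable.of_nonneg_of_le (fun k => hfnonneg _) (fun k => ?_) hsum2
    have hb := hfbound (k + 1) (by omega)
    have hcast : (((k + 1 : ℕ) : ℝ) ^ (-s)) ^ 2 = ((k + 1 : ℕ) : ℝ) ^ (-(2 * s)) := by
      rw [← Real.rpow_natCast (((k + 1 : ℕ) : ℝ) ^ (-s)) 2,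
        ← Real.rpow_mul (Nat.cast_nonneg _)]
      norm_num
      ring_nf
    calc f (k + 1) ≤ Real.Gamma (2 * p) ^ 2 * (((k + 1 : ℕ) : ℝ) ^ (-s)) ^ 2 := hb
      _ = Real.Gamma (2 * p) ^ 2 * (((k + 1 : ℕ) : ℝ) ^ (-(2 * s))) := by rw [hcast]
  -- partial sums of a² are partial sums of f
  have hpartial : ∀ n : ℕ, ∑ k ∈ Finset.Icc 1 n, (a k) ^ 2 = ∑ j ∈ Finset.range n, f j := by
    intro n
    rw [← Finset.Ico_add_one_right_eq_Icc, Finset.sum_Ico_eq_sum_range]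
    refine Finset.sum_congr rfl fun j _ => ?_
    rw [ha (1 + j) (by omega)]
    simp only [hf_def]
    have h1 : ((1 + j : ℕ) : ℝ) = (j : ℝ) + 1 := by push_cast; ring
    have h2 : (j : ℝ) + 1 + 2 * p - 1 = (j : ℝ) + 2 * p := by ring
    rw [h1, h2]
  refine ⟨part1, hsummable, fun n hn => ?_⟩
  calc ∫ ω, (M n ω) ^ 2 ∂μ ≤ ∑ k ∈ Finset.Icc 1 n, (a k) ^ 2 := part1 n hn
    _ = ∑ j ∈ Finset.range n, f j := hpartial n
    _ ≤ ∑' k, f k := Summable.sum_le_tsum _ (fun k _ => hfnonneg k) hsummable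
end

section
/- In the superdiffusive regime 3/4 < p ≤ 1, the martingale M_n = a_n S_n is bounded in L^4: E[M_n^4] ≤ 6(1 + Σ_{k=1}^n a_k^2) Σ_{k=1}^n a_k^2 for all n, and hence sup_{n≥1} E[M_n^4] < ∞. -/
set_option maxHeartbeats 1000000

open MeasureTheory ProbabilityTheory Real Finset

/-- Pull-out property for bounded measurable factors, in integral form. -/
lemma erw_pullout {Ω : Type*} {m m0 : MeasurableSpace Ω} (hm : m ≤ m0) (μ : Measure Ω)
    [IsProbabilityMeasure μ] {F G : Ω → ℝ} (hF : StronglyMeasurable[m] F) {C : ℝ}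
    (hFb : ∀ ω, ‖F ω‖ ≤ C) (hG : Integrable G μ) :
    ∫ ω, F ω * G ω ∂μ = ∫ ω, F ω * (μ[G|m]) ω ∂μ := by
  have h := condExp_stronglyMeasurable_mul_of_bound hm hF hG C (ae_of_all _ hFb)
  calc ∫ ω, F ω * G ω ∂μ = ∫ ω, (F * G) ω ∂μ := rfl
    _ = ∫ ω, (μ[F * G|m]) ω ∂μ := (integral_condExp hm).symm
    _ = ∫ ω, (F * μ[G|m]) ω ∂μ := integral_congr_ae h
    _ = ∫ ω, F ω * (μ[G|m]) ω ∂μ := rfl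

/-- Superdiffusive regime `3/4 < p ≤ 1`: the martingale `M_n = a_n S_n` is bounded in `L⁴`:
`E[M_n⁴] ≤ 6(1 + Σ_{k=1}^n a_k²) Σ_{k=1}^n a_k²` for all `n ≥ 1`, and hence
`sup_{n≥1} E[M_n⁴] < ∞`. -/
theorem erw_L4_bounded
    {Ω : Type*} [m0 : MeasurableSpace Ω] (μ : Measure Ω) [IsProbabilityMeasure μ]
    (p : ℝ) (hp : p ∈ Set.Ioc (3 / 4 : ℝ) 1)
    (ℱ : ℕ → MeasurableSpace Ω) (hℱ : ∀ n, ℱ n ≤ m0) (hmono : Monotone ℱ)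
    (X : ℕ → Ω → ℝ)
    (hadp : ∀ i, Measurable[ℱ i] (X i))
    (hpm : ∀ i ≥ 1, ∀ ω, X i ω = 1 ∨ X i ω = -1)
    (S : ℕ → Ω → ℝ) (hS : ∀ n ω, S n ω = ∑ k ∈ Finset.Icc 1 n, X k ω)
    (hCE : ∀ n ≥ 1, μ[X (n + 1) | ℱ n] =ᵐ[μ] fun ω => (2 * p - 1) * S n ω / n)
    (a : ℕ → ℝ)
    (ha : ∀ n ≥ 1, a n = Real.Gamma n * Real.Gamma (2 * p) / Real.Gamma (n + 2 * p - 1))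
    (M : ℕ → Ω → ℝ) (hM : ∀ n ω, M n ω = a n * S n ω) :
    (∀ n ≥ 1, ∫ ω, (M n ω) ^ 4 ∂μ
        ≤ 6 * (1 + ∑ k ∈ Finset.Icc 1 n, (a k) ^ 2) * ∑ k ∈ Finset.Icc 1 n, (a k) ^ 2)
    ∧ ∃ C : ℝ, ∀ n ≥ 1, ∫ ω, (M n ω) ^ 4 ∂μ ≤ C := by
  obtain ⟨hp1, hp2⟩ := hp
  -- basic facts about X and S
  have hXsq : ∀ i, 1 ≤ i → ∀ ω, (X i ω) ^ 2 = 1 := by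
    intro i hi ω; rcases hpm i hi ω with h | h <;> rw [h] <;> norm_num
  have hXabs : ∀ i, 1 ≤ i → ∀ ω, |X i ω| ≤ 1 := by
    intro i hi ω; rcases hpm i hi ω with h | h <;> rw [h] <;> norm_num
  have hXm : ∀ i, Measurable (X i) := fun i => (hadp i).mono (hℱ i) le_rfl
  have hSm : ∀ n, Measurable[ℱ n] (S n) := by
    intro n
    have : S n = fun ω => ∑ k ∈ Finset.Icc 1 n, X k ω := funext (hS n)
    rw [this]
    exact Finset.measurable_sum _ fun k hk =>
      (hadp k).mono (hmono (Finset.mem_Icc.mp hk).2) le_rfl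
  have hSmeas : ∀ n, Measurable (S n) := fun n => (hSm n).mono (hℱ n) le_rfl
  have hSb : ∀ n ω, |S n ω| ≤ (n : ℝ) := by
    intro n ω
    rw [hS]
    calc |∑ k ∈ Finset.Icc 1 n, X k ω| ≤ ∑ k ∈ Finset.Icc 1 n, |X k ω| :=
          Finset.abs_sum_le_sum_abs _ _
      _ ≤ ∑ k ∈ Finset.Icc 1 n, (1 : ℝ) := by
          refine Finset.sum_le_sum fun k hk => hXabs k (Finset.mem_Icc.mp hk).1 ω
      _ = (n : ℝ) := by simp [Nat.card_Icc]
  -- integrability of bounded measurable functions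
  have hbd : ∀ (F : Ω → ℝ) (C : ℝ), Measurable F → (∀ ω, |F ω| ≤ C) → Integrable F μ := by
    intro F C hFm hC
    exact (integrable_const C).mono' hFm.aestronglyMeasurable
      (ae_of_all _ fun ω => by simpa [Real.norm_eq_abs] using hC ω)
  have hintS : ∀ (n k : ℕ), Integrable (fun ω => (S n ω) ^ k) μ := by
    intro n k
    refine hbd _ ((n : ℝ) ^ k) ((hSmeas n).pow_const k) fun ω => ?_
    rw [abs_pow]; exact pow_le_pow_left₀ (abs_nonneg _) (hSb n ω) k
  have hintFX : ∀ (n : ℕ) (F : Ω → ℝ) (C : ℝ), Measurable[ℱ n] F → (∀ ω, |F ω| ≤ C) →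
      Integrable (fun ω => F ω * X (n + 1) ω) μ := by
    intro n F C hFm hC
    refine hbd _ C ((hFm.mono (hℱ n) le_rfl).mul (hXm (n + 1))) fun ω => ?_
    have h1 : (0 : ℝ) ≤ C := le_trans (abs_nonneg _) (hC ω)
    rw [abs_mul]
    calc |F ω| * |X (n + 1) ω| ≤ C * 1 :=
          mul_le_mul (hC ω) (hXabs (n + 1) (by omega) ω) (abs_nonneg _) h1
      _ = C := mul_one C
  -- key identity from the conditional expectation
  have hkey : ∀ n, 1 ≤ n → ∀ (F : Ω → ℝ) (C : ℝ), StronglyMeasurable[ℱ n] F →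
      (∀ ω, |F ω| ≤ C) →
      (n : ℝ) * ∫ ω, F ω * X (n + 1) ω ∂μ = (2 * p - 1) * ∫ ω, F ω * S n ω ∂μ := by
    intro n hn F C hF hFb
    have hn0 : ((n : ℝ)) ≠ 0 := Nat.cast_ne_zero.mpr (by omega)
    have hXint : Integrable (X (n + 1)) μ := hbd _ 1 (hXm (n + 1)) (hXabs (n + 1) (by omega))
    rw [erw_pullout (hℱ n) μ hF (fun ω => by simpa [Real.norm_eq_abs] using hFb ω) hXint]
    have h1 : ∫ ω, F ω * (μ[X (n + 1)|ℱ n]) ω ∂μ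
        = ∫ ω, F ω * ((2 * p - 1) * S n ω / n) ∂μ := by
      refine integral_congr_ae ?_
      filter_upwards [hCE n hn] with ω h
      rw [h]
    rw [h1]
    have h2 : (fun ω => F ω * ((2 * p - 1) * S n ω / n))
        = fun ω => (2 * p - 1) / n * (F ω * S n ω) := funext fun ω => by ring
    rw [h2, integral_const_mul ((2 * p - 1) / (n : ℝ)) (fun ω => F ω * S n ω)]
    field_simp
  -- the one-step decomposition of S
  have hstep : ∀ n ω, S (n + 1) ω = S n ω + X (n + 1) ω := by
    intro n ω
    rw [hS, hS]
    exact Finset.sum_Icc_succ_top (by omega) _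
  -- second moment recursion
  have hI2rec : ∀ n : ℕ, 1 ≤ n → (n : ℝ) * (∫ ω, (S (n + 1) ω) ^ 2 ∂μ)
      = ((n : ℝ) + 2 * (2 * p - 1)) * (∫ ω, (S n ω) ^ 2 ∂μ) + n := by
    intro n hn
    have e : ∀ ω, (S (n + 1) ω) ^ 2 = ((S n ω) ^ 2 + 1) + (2 * S n ω) * X (n + 1) ω := by
      intro ω
      rw [hstep n ω]
      rcases hpm (n + 1) (by omega) ω with h | h <;> rw [h] <;> ring
    have hFb : ∀ ω, |2 * S n ω| ≤ 2 * n := by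
      intro ω
      rw [abs_mul]
      calc |(2:ℝ)| * |S n ω| = 2 * |S n ω| := by norm_num
        _ ≤ 2 * n := by have := hSb n ω; linarith
    have hi1 : Integrable (fun ω => (S n ω) ^ 2 + 1) μ := (hintS n 2).add (integrable_const 1)
    have hi2 : Integrable (fun ω => (2 * S n ω) * X (n + 1) ω) μ :=
      hintFX n _ (2 * n) ((hSm n).const_mul 2) hFb
    have e1 : ∫ ω, (S (n + 1) ω) ^ 2 ∂μ
        = (∫ ω, (S n ω) ^ 2 ∂μ + 1) + ∫ ω, (2 * S n ω) * X (n + 1) ω ∂μ := by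
      rw [integral_congr_ae (ae_of_all _ e), integral_add hi1 hi2,
        integral_add (hintS n 2) (integrable_const 1), integral_const]
      simp
    have e2 : (n : ℝ) * ∫ ω, (2 * S n ω) * X (n + 1) ω ∂μ
        = (2 * p - 1) * (2 * ∫ ω, (S n ω) ^ 2 ∂μ) := by
      rw [hkey n hn _ (2 * n) ((hSm n).const_mul 2).stronglyMeasurable hFb]
      have : (fun ω => 2 * S n ω * S n ω) = fun ω => 2 * (S n ω) ^ 2 := funext fun ω => by ring
      rw [this, integral_const_mul]
    rw [e1]
    nlinarith [e2]
  -- fourth moment recursion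
  have hI4rec : ∀ n : ℕ, 1 ≤ n → (n : ℝ) * (∫ ω, (S (n + 1) ω) ^ 4 ∂μ)
      = ((n : ℝ) + 4 * (2 * p - 1)) * (∫ ω, (S n ω) ^ 4 ∂μ)
        + (6 * (n : ℝ) + 4 * (2 * p - 1)) * (∫ ω, (S n ω) ^ 2 ∂μ) + n := by
    intro n hn
    have e : ∀ ω, (S (n + 1) ω) ^ 4
        = ((S n ω) ^ 4 + 6 * (S n ω) ^ 2 + 1)
          + (4 * (S n ω) ^ 3 + 4 * S n ω) * X (n + 1) ω := by
      intro ω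
      rw [hstep n ω]
      rcases hpm (n + 1) (by omega) ω with h | h <;> rw [h] <;> ring
    have hFm : Measurable[ℱ n] (fun ω => 4 * (S n ω) ^ 3 + 4 * S n ω) :=
      (((hSm n).pow_const 3).const_mul 4).add ((hSm n).const_mul 4)
    have hFb : ∀ ω, |4 * (S n ω) ^ 3 + 4 * S n ω| ≤ 4 * (n : ℝ) ^ 3 + 4 * n := by
      intro ω
      have h1 : |S n ω| ≤ n := hSb n ω
      have h0 : (0 : ℝ) ≤ |S n ω| := abs_nonneg _
      calc |4 * (S n ω) ^ 3 + 4 * S n ω| ≤ |4 * (S n ω) ^ 3| + |4 * S n ω| := abs_add_le _ _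
        _ = 4 * |S n ω| ^ 3 + 4 * |S n ω| := by
            rw [abs_mul, abs_mul, abs_pow]; norm_num
        _ ≤ 4 * (n : ℝ) ^ 3 + 4 * n := by gcongr
    have hi0 : Integrable (fun ω => (S n ω) ^ 4 + 6 * (S n ω) ^ 2) μ :=
      (hintS n 4).add ((hintS n 2).const_mul 6)
    have hi1 : Integrable (fun ω => (S n ω) ^ 4 + 6 * (S n ω) ^ 2 + 1) μ :=
      hi0.add (integrable_const 1)
    have hi2 : Integrable (fun ω => (4 * (S n ω) ^ 3 + 4 * S n ω) * X (n + 1) ω) μ :=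
      hintFX n _ (4 * (n : ℝ) ^ 3 + 4 * n) hFm hFb
    have e1 : ∫ ω, (S (n + 1) ω) ^ 4 ∂μ
        = (∫ ω, (S n ω) ^ 4 ∂μ + 6 * ∫ ω, (S n ω) ^ 2 ∂μ + 1)
          + ∫ ω, (4 * (S n ω) ^ 3 + 4 * S n ω) * X (n + 1) ω ∂μ := by
      rw [integral_congr_ae (ae_of_all _ e), integral_add hi1 hi2,
        integral_add hi0 (integrable_const 1),
        integral_add (hintS n 4) ((hintS n 2).const_mul 6), integral_const,
        integral_const_mul]
      simp
    have e2 : (n : ℝ) * ∫ ω, (4 * (S n ω) ^ 3 + 4 * S n ω) * X (n + 1) ω ∂μ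
        = (2 * p - 1) * (4 * ∫ ω, (S n ω) ^ 4 ∂μ + 4 * ∫ ω, (S n ω) ^ 2 ∂μ) := by
      rw [hkey n hn _ (4 * (n : ℝ) ^ 3 + 4 * n) hFm.stronglyMeasurable hFb]
      have : (fun ω => (4 * (S n ω) ^ 3 + 4 * S n ω) * S n ω)
          = fun ω => 4 * (S n ω) ^ 4 + 4 * (S n ω) ^ 2 := funext fun ω => by ring
      rw [this, integral_add ((hintS n 4).const_mul 4) ((hintS n 2).const_mul 4),
        integral_const_mul, integral_const_mul]
    rw [e1]
    nlinarith [e2]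
  -- facts about a
  have hapos : ∀ n : ℕ, 1 ≤ n → 0 < a n := by
    intro n hn
    rw [ha n hn]
    have h1 : (0 : ℝ) < n := by exact_mod_cast hn
    have h2 : (0 : ℝ) < 2 * p := by linarith
    have h3 : (0 : ℝ) < (n : ℝ) + 2 * p - 1 := by linarith
    exact div_pos (mul_pos (Real.Gamma_pos_of_pos h1) (Real.Gamma_pos_of_pos h2))
      (Real.Gamma_pos_of_pos h3)
  have ha1 : a 1 = 1 := by
    rw [ha 1 le_rfl]
    have h2 : (0 : ℝ) < 2 * p := by linarith
    rw [show ((1 : ℕ) : ℝ) = 1 by norm_num, show (1 : ℝ) + 2 * p - 1 = 2 * p by ring,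
      Real.Gamma_one, one_mul, div_self (ne_of_gt (Real.Gamma_pos_of_pos h2))]
  have harec : ∀ n : ℕ, 1 ≤ n → a (n + 1) * ((n : ℝ) + 2 * p - 1) = a n * n := by
    intro n hn
    have h1 : (0 : ℝ) < n := by exact_mod_cast hn
    have h3 : (0 : ℝ) < (n : ℝ) + 2 * p - 1 := by linarith
    rw [ha n hn, ha (n + 1) (by omega)]
    push_cast
    rw [show (n : ℝ) + 1 + 2 * p - 1 = ((n : ℝ) + 2 * p - 1) + 1 by ring,
      Real.Gamma_add_one (ne_of_gt h3), Real.Gamma_add_one (ne_of_gt h1)]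
    have g3 := Real.Gamma_pos_of_pos h3
    field_simp
  -- abbreviations
  set I2 : ℕ → ℝ := fun n => ∫ ω, (S n ω) ^ 2 ∂μ with hI2def
  set I4 : ℕ → ℝ := fun n => ∫ ω, (S n ω) ^ 4 ∂μ with hI4def
  have hI2nn : ∀ n, 0 ≤ I2 n := fun n => integral_nonneg fun ω => by positivity
  have hI4nn : ∀ n, 0 ≤ I4 n := fun n => integral_nonneg fun ω => by positivity
  have hS1 : ∀ ω, S 1 ω = X 1 ω := by
    intro ω; rw [hS]; simp
  have hI21 : I2 1 = 1 := by
    have e : ∀ ω, (S 1 ω) ^ 2 = 1 := fun ω => by rw [hS1]; exact hXsq 1 le_rfl ω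
    simp only [hI2def]
    rw [integral_congr_ae (ae_of_all _ e)]
    simp
  have hI41 : I4 1 = 1 := by
    have e : ∀ ω, (S 1 ω) ^ 4 = 1 := by
      intro ω
      rw [hS1]
      rcases hpm 1 le_rfl ω with h | h <;> rw [h] <;> norm_num
    simp only [hI4def]
    rw [integral_congr_ae (ae_of_all _ e)]
    simp
  set γ : ℝ := 2 * p - 1 with hγdef
  have hγ : 1 / 2 < γ := by rw [hγdef]; linarith
  have hγ0 : (0 : ℝ) < γ := by linarith
  set A : ℕ → ℝ := fun n => ∑ k ∈ Finset.Icc 1 n, (a k) ^ 2 with hAdef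
  have hA1 : A 1 = 1 := by simp [hAdef, Finset.Icc_self, ha1]
  have hAsucc : ∀ n : ℕ, 1 ≤ n → A (n + 1) = A n + a (n + 1) ^ 2 := by
    intro n hn
    simp only [hAdef]
    exact Finset.sum_Icc_succ_top (by omega) _
  have hAnn : ∀ n, 0 ≤ A n := fun n => Finset.sum_nonneg fun k _ => sq_nonneg _
  -- coefficient inequalities
  have hcoef : ∀ n : ℕ, 1 ≤ n →
      a (n + 1) ^ 2 * ((n : ℝ) + 2 * γ) ≤ a n ^ 2 * n
      ∧ a (n + 1) ^ 4 * ((n : ℝ) + 4 * γ) ≤ a n ^ 4 * n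
      ∧ a (n + 1) ^ 2 * (6 * (n : ℝ) + 4 * γ) ≤ 6 * a n ^ 2 * n
      ∧ a (n + 1) ^ 2 * ((n : ℝ) + 1 + (2 * γ - 1)) ≤ a n ^ 2 * n := by
    intro n hn
    have hn' : (0 : ℝ) < n := by exact_mod_cast hn
    have he : a (n + 1) * ((n : ℝ) + γ) = a n * n := by
      have := harec n hn; rw [hγdef]; linarith [this]
    have he2 : a (n + 1) ^ 2 * ((n : ℝ) + γ) ^ 2 = a n ^ 2 * (n : ℝ) ^ 2 := by
      have := congrArg (· ^ 2) he
      simpa [mul_pow] using this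
    have he4 : a (n + 1) ^ 4 * ((n : ℝ) + γ) ^ 4 = a n ^ 4 * (n : ℝ) ^ 4 := by
      have := congrArg (· ^ 4) he
      simpa [mul_pow] using this
    have ha2nn : (0 : ℝ) ≤ a (n + 1) ^ 2 := sq_nonneg _
    have ha4nn : (0 : ℝ) ≤ a (n + 1) ^ 4 := by positivity
    refine ⟨?_, ?_, ?_, ?_⟩
    · have hpoly : (n : ℝ) * ((n : ℝ) + 2 * γ) ≤ ((n : ℝ) + γ) ^ 2 := by nlinarith [sq_nonneg γ]
      have h1 : a (n + 1) ^ 2 * ((n : ℝ) + 2 * γ) * n ≤ a n ^ 2 * n * n := by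
        nlinarith [mul_le_mul_of_nonneg_left hpoly ha2nn, he2]
      exact le_of_mul_le_mul_right h1 hn'
    · have hpoly : (n : ℝ) ^ 3 * ((n : ℝ) + 4 * γ) ≤ ((n : ℝ) + γ) ^ 4 := by
        have hid : ((n : ℝ) + γ) ^ 4 - (n : ℝ) ^ 3 * ((n : ℝ) + 4 * γ)
            = 6 * γ ^ 2 * (n : ℝ) ^ 2 + 4 * γ ^ 3 * (n : ℝ) + γ ^ 4 := by ring
        nlinarith [hid, mul_pos (mul_pos hγ0 hγ0) hγ0, mul_pos hγ0 hγ0, hn',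
          mul_pos (mul_pos hγ0 hγ0) (mul_pos hγ0 hγ0),
          mul_pos (mul_pos hγ0 hγ0) (mul_pos hn' hn'),
          mul_pos (mul_pos (mul_pos hγ0 hγ0) hγ0) hn']
      have h1 : a (n + 1) ^ 4 * ((n : ℝ) + 4 * γ) * (n : ℝ) ^ 3 ≤ a n ^ 4 * n * (n : ℝ) ^ 3 := by
        nlinarith [mul_le_mul_of_nonneg_left hpoly ha4nn, he4]
      exact le_of_mul_le_mul_right h1 (by positivity)
    · have hpoly : (n : ℝ) * (6 * (n : ℝ) + 4 * γ) ≤ 6 * ((n : ℝ) + γ) ^ 2 := by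
        nlinarith [sq_nonneg γ, hγ0, hn']
      have h1 : a (n + 1) ^ 2 * (6 * (n : ℝ) + 4 * γ) * n ≤ 6 * a n ^ 2 * n * n := by
        nlinarith [mul_le_mul_of_nonneg_left hpoly ha2nn, he2]
      exact le_of_mul_le_mul_right h1 hn'
    · have hpoly : (n : ℝ) * ((n : ℝ) + 1 + (2 * γ - 1)) ≤ ((n : ℝ) + γ) ^ 2 := by
        nlinarith [sq_nonneg γ]
      have h1 : a (n + 1) ^ 2 * ((n : ℝ) + 1 + (2 * γ - 1)) * n ≤ a n ^ 2 * n * n := by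
        nlinarith [mul_le_mul_of_nonneg_left hpoly ha2nn, he2]
      exact le_of_mul_le_mul_right h1 hn'
  -- main induction
  have main : ∀ n : ℕ, 1 ≤ n →
      a n ^ 2 * I2 n ≤ A n ∧ a n ^ 4 * I4 n ≤ 6 * A n + 6 * (A n) ^ 2 := by
    intro n hn
    induction n, hn using Nat.le_induction with
    | base => rw [ha1, hA1, hI21, hI41]; norm_num
    | succ n hn ih =>
      obtain ⟨ih2, ih4⟩ := ih
      obtain ⟨hc2, hc4, hc6, _⟩ := hcoef n hn
      have hn' : (0 : ℝ) < n := by exact_mod_cast hn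
      have hr2 := hI2rec n hn
      have hr4 := hI4rec n hn
      have ha2nn : (0 : ℝ) ≤ a (n + 1) ^ 2 := sq_nonneg _
      have ha4nn : (0 : ℝ) ≤ a (n + 1) ^ 4 := by positivity
      have hq2 : a (n + 1) ^ 2 * I2 (n + 1) ≤ a n ^ 2 * I2 n + a (n + 1) ^ 2 := by
        refine le_of_mul_le_mul_left ?_ hn'
        calc (n : ℝ) * (a (n + 1) ^ 2 * I2 (n + 1))
            = a (n + 1) ^ 2 * ((n : ℝ) * I2 (n + 1)) := by ring
          _ = a (n + 1) ^ 2 * (((n : ℝ) + 2 * γ) * I2 n + n) := by rw [hr2]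
          _ ≤ a n ^ 2 * n * I2 n + a (n + 1) ^ 2 * n := by
              nlinarith [mul_le_mul_of_nonneg_right hc2 (hI2nn n)]
          _ = (n : ℝ) * (a n ^ 2 * I2 n + a (n + 1) ^ 2) := by ring
      have hq4 : a (n + 1) ^ 4 * I4 (n + 1)
          ≤ a n ^ 4 * I4 n + 6 * a (n + 1) ^ 2 * (a n ^ 2 * I2 n) + a (n + 1) ^ 4 := by
        refine le_of_mul_le_mul_left ?_ hn'
        have hb6 : a (n + 1) ^ 4 * ((6 * (n : ℝ) + 4 * γ) * I2 n)
            ≤ a (n + 1) ^ 2 * (6 * a n ^ 2 * n) * I2 n := by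
          have := mul_le_mul_of_nonneg_right
            (mul_le_mul_of_nonneg_left hc6 ha2nn) (hI2nn n)
          nlinarith [this]
        have hb4 : a (n + 1) ^ 4 * (((n : ℝ) + 4 * γ) * I4 n) ≤ a n ^ 4 * n * I4 n := by
          nlinarith [mul_le_mul_of_nonneg_right hc4 (hI4nn n)]
        calc (n : ℝ) * (a (n + 1) ^ 4 * I4 (n + 1))
            = a (n + 1) ^ 4 * ((n : ℝ) * I4 (n + 1)) := by ring
          _ = a (n + 1) ^ 4 * (((n : ℝ) + 4 * γ) * I4 n)
              + a (n + 1) ^ 4 * ((6 * (n : ℝ) + 4 * γ) * I2 n)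
              + a (n + 1) ^ 4 * n := by rw [hr4]; ring
          _ ≤ a n ^ 4 * n * I4 n + a (n + 1) ^ 2 * (6 * a n ^ 2 * n) * I2 n
              + a (n + 1) ^ 4 * n := by linarith
          _ = (n : ℝ) * (a n ^ 4 * I4 n + 6 * a (n + 1) ^ 2 * (a n ^ 2 * I2 n)
              + a (n + 1) ^ 4) := by ring
      constructor
      · rw [hAsucc n hn]; linarith
      · rw [hAsucc n hn]
        have h2 : a (n + 1) ^ 2 * (a n ^ 2 * I2 n) ≤ a (n + 1) ^ 2 * A n :=
          mul_le_mul_of_nonneg_left ih2 ha2nn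
        nlinarith [hAnn n, sq_nonneg (a (n + 1))]
  -- summability bound
  have hlam : (0 : ℝ) < 2 * γ - 1 := by linarith
  have hAbd : ∀ n : ℕ, 1 ≤ n →
      A n + (n : ℝ) * a n ^ 2 / (2 * γ - 1) ≤ 1 + 1 / (2 * γ - 1) := by
    intro n hn
    induction n, hn using Nat.le_induction with
    | base => rw [hA1, ha1]; norm_num
    | succ n hn ih =>
      obtain ⟨_, _, _, hct⟩ := hcoef n hn
      rw [hAsucc n hn]
      have key : a (n + 1) ^ 2 + ((n : ℝ) + 1) * a (n + 1) ^ 2 / (2 * γ - 1)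
          ≤ (n : ℝ) * a n ^ 2 / (2 * γ - 1) := by
        have h2 : a (n + 1) ^ 2 + ((n : ℝ) + 1) * a (n + 1) ^ 2 / (2 * γ - 1)
            = (a (n + 1) ^ 2 * ((n : ℝ) + 1 + (2 * γ - 1))) / (2 * γ - 1) := by
          field_simp; ring
        rw [h2, div_le_div_iff₀ hlam hlam]
        nlinarith [hct, hlam]
      push_cast
      linarith
  have hAB : ∀ n : ℕ, 1 ≤ n → A n ≤ 1 + 1 / (2 * γ - 1) := by
    intro n hn
    have h := hAbd n hn
    have hnn : 0 ≤ (n : ℝ) * a n ^ 2 / (2 * γ - 1) := by positivity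
    linarith
  -- conversion to M
  have hMint : ∀ n : ℕ, 1 ≤ n → ∫ ω, (M n ω) ^ 4 ∂μ = a n ^ 4 * I4 n := by
    intro n hn
    have e : ∀ ω, (M n ω) ^ 4 = a n ^ 4 * (S n ω) ^ 4 := fun ω => by rw [hM]; ring
    simp only [hI4def]
    rw [integral_congr_ae (ae_of_all _ e), integral_const_mul]
  constructor
  · intro n hn
    rw [hMint n hn]
    calc a n ^ 4 * I4 n ≤ 6 * A n + 6 * (A n) ^ 2 := (main n hn).2
      _ = 6 * (1 + A n) * A n := by ring
  · refine ⟨6 * (1 + (1 + 1 / (2 * γ - 1))) * (1 + 1 / (2 * γ - 1)), fun n hn => ?_⟩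
    rw [hMint n hn]
    have h := (main n hn).2
    have hB := hAB n hn
    have hAn := hAnn n
    nlinarith [h, hB, hAn, hlam]
end

section
/- Let L be the limit of S_n/n^{2p-1} in the superdiffusive regime 3/4 < p < 1 with q = 1/2. Then L has mean 0, skewness 0, and kurtosis κ(p) = 6(8p^2-4p-1)(Γ(2(2p-1)))^2 / ((8p-5) Γ(4(2p-1))). Moreover κ(p) < 3 for all p ∈ (3/4, 1], so L is not Gaussian. -/
open MeasureTheory ProbabilityTheory Real
open scoped NNReal

section ErwAux

open Set
open scoped ENNReal

lemma myOddZero (f : ℝ → ℝ) (h : ∀ x, f (-x) = -f x) : ∫ x : ℝ, f x = 0 := by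
  have h1 : ∫ x : ℝ, f (-x) = ∫ x : ℝ, f x := by
    conv_rhs => rw [← Measure.map_neg_eq_self (volume : Measure ℝ)]
    exact ((Homeomorph.neg ℝ).measurableEmbedding.integral_map f).symm
  have h2 : ∫ x : ℝ, f (-x) = - ∫ x : ℝ, f x := by
    simp_rw [h]; exact integral_neg f
  linarith

lemma myIntegrableGauss {b : ℝ} (hb : 0 < b) (k : ℕ) :
    Integrable (fun x : ℝ => x ^ k * rexp (-b * x ^ 2)) := by
  have := integrable_rpow_mul_exp_neg_mul_sq hb (s := (k : ℝ))
    (by exact_mod_cast neg_one_lt_zero.trans_le (Nat.cast_nonneg k))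
  simpa [Real.rpow_natCast] using this

lemma myEvenGauss {b : ℝ} (hb : 0 < b) (n : ℕ) :
    ∫ x : ℝ, x ^ (2 * n) * rexp (-b * x ^ 2)
      = b ^ (-(2 * (n : ℝ) + 1) / 2) * Real.Gamma ((2 * (n : ℝ) + 1) / 2) := by
  have h1 : (fun x : ℝ => x ^ (2 * n) * rexp (-b * x ^ 2))
      = fun x : ℝ => |x| ^ ((2 * n : ℕ) : ℝ) * rexp (-b * |x| ^ 2) := by
    funext x
    simp only [Real.rpow_natCast, sq_abs, pow_mul]
  have habs := integral_comp_abs (f := fun t : ℝ => t ^ ((2 * n : ℕ) : ℝ) * rexp (-b * t ^ 2))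
  rw [h1, habs]
  have h2 : ∫ t in Ioi (0:ℝ), t ^ ((2 * n : ℕ) : ℝ) * rexp (-b * t ^ 2)
      = b ^ (-(((2 * n : ℕ) : ℝ) + 1) / 2) * (1 / 2) * Real.Gamma ((((2 * n : ℕ) : ℝ) + 1) / 2) := by
    rw [← integral_rpow_mul_exp_neg_mul_rpow two_pos
      (by exact_mod_cast neg_one_lt_zero.trans_le (Nat.cast_nonneg _)) hb]
    refine setIntegral_congr_fun measurableSet_Ioi (fun x hx => ?_)
    rw [Real.rpow_two]
  rw [h2]
  push_cast
  ring

lemma myIntegralGaussianReal (m : ℝ) {v : ℝ≥0} (hv : v ≠ 0) (g : ℝ → ℝ) :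
    ∫ x, g x ∂(gaussianReal m v) = ∫ x, gaussianPDFReal m v x * g x := by
  rw [gaussianReal_of_var_ne_zero _ hv]
  have hd : gaussianPDF m v = fun x => ((gaussianPDFReal m v x).toNNReal : ℝ≥0∞) := rfl
  rw [hd, integral_withDensity_eq_integral_smul
      ((measurable_gaussianPDFReal m v).real_toNNReal) g]
  congr 1
  funext x
  rw [NNReal.smul_def, Real.coe_toNNReal _ (gaussianPDFReal_nonneg m v x), smul_eq_mul]

lemma myPdfZero {v : ℝ≥0} (hv : v ≠ 0) (x : ℝ) :
    gaussianPDFReal 0 v x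
      = (Real.sqrt π * Real.sqrt (2 * (v:ℝ)))⁻¹ * rexp (-(2 * (v:ℝ))⁻¹ * x ^ 2) := by
  have hv' : (v:ℝ) ≠ 0 := NNReal.coe_ne_zero.mpr hv
  unfold gaussianPDFReal
  rw [show (2*π*(v:ℝ)) = π * (2*(v:ℝ)) by ring, Real.sqrt_mul pi_pos.le]
  congr 1
  rw [sub_zero]
  field_simp

lemma myGaussMomentEven {v : ℝ≥0} (hv : v ≠ 0) (n : ℕ) :
    ∫ x, x ^ (2 * n) ∂(gaussianReal 0 v)
      = (2 * (v:ℝ)) ^ n * Real.Gamma ((n:ℝ) + 1/2) / Real.sqrt π := by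
  have hv' : 0 < (v:ℝ) := lt_of_le_of_ne v.coe_nonneg (Ne.symm (NNReal.coe_ne_zero.mpr hv))
  have h2v : (0:ℝ) < 2 * (v:ℝ) := by positivity
  have hb : 0 < (2 * (v:ℝ))⁻¹ := by positivity
  rw [myIntegralGaussianReal 0 hv]
  have h1 : (fun x : ℝ => gaussianPDFReal 0 v x * x ^ (2*n))
      = fun x : ℝ => (Real.sqrt π * Real.sqrt (2*(v:ℝ)))⁻¹
          * (x ^ (2*n) * rexp (-(2*(v:ℝ))⁻¹ * x ^ 2)) := by
    funext x; rw [myPdfZero hv]; ring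
  rw [h1, integral_const_mul, myEvenGauss hb n]
  have e1 : ((2*(v:ℝ))⁻¹) ^ (-(2*(n:ℝ)+1)/2) = (2*(v:ℝ)) ^ ((2*(n:ℝ)+1)/2) := by
    rw [Real.inv_rpow h2v.le, ← Real.rpow_neg h2v.le]
    congr 1; ring
  have e2 : (2*(v:ℝ)) ^ ((2*(n:ℝ)+1)/2) = (2*(v:ℝ)) ^ n * Real.sqrt (2*(v:ℝ)) := by
    rw [show (2*(n:ℝ)+1)/2 = (n:ℝ) + 1/2 by ring, Real.rpow_add h2v, Real.rpow_natCast,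
      Real.sqrt_eq_rpow]
  have e3 : (2*(n:ℝ)+1)/2 = (n:ℝ) + 1/2 := by ring
  rw [e1, e2, e3]
  have hsp : Real.sqrt π ≠ 0 := ne_of_gt (Real.sqrt_pos.mpr pi_pos)
  have hsv : Real.sqrt (2*(v:ℝ)) ≠ 0 := ne_of_gt (Real.sqrt_pos.mpr h2v)
  field_simp

lemma myGammaThreeHalf : Real.Gamma (3/2) = Real.sqrt π / 2 := by
  rw [show (3/2:ℝ) = 1/2 + 1 by norm_num, Real.Gamma_add_one (by norm_num),
    Real.Gamma_one_half_eq]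
  ring

lemma myGammaFiveHalf : Real.Gamma (5/2) = 3 * Real.sqrt π / 4 := by
  rw [show (5/2:ℝ) = 3/2 + 1 by norm_num, Real.Gamma_add_one (by norm_num), myGammaThreeHalf]
  ring

lemma myGaussMoment2 {v : ℝ≥0} (hv : v ≠ 0) : ∫ x, x ^ 2 ∂(gaussianReal 0 v) = (v:ℝ) := by
  have h := myGaussMomentEven hv 1
  norm_num at h
  rw [myGammaThreeHalf] at h
  rw [h]
  have hsp : Real.sqrt π ≠ 0 := ne_of_gt (Real.sqrt_pos.mpr pi_pos)
  field_simp

lemma myGaussMoment4 {v : ℝ≥0} (hv : v ≠ 0) :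
    ∫ x, x ^ 4 ∂(gaussianReal 0 v) = 3 * (v:ℝ) ^ 2 := by
  have h := myGaussMomentEven hv 2
  norm_num at h
  rw [myGammaFiveHalf] at h
  rw [h]
  have hsp : Real.sqrt π ≠ 0 := ne_of_gt (Real.sqrt_pos.mpr pi_pos)
  field_simp
  ring

lemma myGaussMoment1 (m : ℝ) {v : ℝ≥0} (hv : v ≠ 0) :
    ∫ x, x ∂(gaussianReal m v) = m := by
  have hv' : 0 < (v:ℝ) := lt_of_le_of_ne v.coe_nonneg (Ne.symm (NNReal.coe_ne_zero.mpr hv))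
  have hb : 0 < (2 * (v:ℝ))⁻¹ := by positivity
  rw [myIntegralGaussianReal m hv]
  have key := (integral_add_right_eq_self (μ := (volume : Measure ℝ))
    (fun x => gaussianPDFReal m v x * x) m).symm
  rw [key]
  have h0 : ∀ x : ℝ, gaussianPDFReal m v (x + m) = gaussianPDFReal 0 v x := by
    intro x; rw [gaussianPDFReal_add]; simp
  simp_rw [h0, mul_add]
  have int1 : Integrable (fun x : ℝ => gaussianPDFReal 0 v x * x) := by
    have hfun : (fun x : ℝ => gaussianPDFReal 0 v x * x)
        = fun x : ℝ => (Real.sqrt π * Real.sqrt (2*(v:ℝ)))⁻¹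
            * (x ^ 1 * rexp (-(2*(v:ℝ))⁻¹ * x ^ 2)) := by
      funext x; rw [myPdfZero hv]; ring
    rw [hfun]
    exact (myIntegrableGauss hb 1).const_mul _
  have int2 : Integrable (fun x : ℝ => gaussianPDFReal 0 v x * m) :=
    (integrable_gaussianPDFReal 0 v).mul_const m
  rw [integral_add int1 int2]
  have hodd : ∫ x : ℝ, gaussianPDFReal 0 v x * x = 0 := by
    refine myOddZero _ (fun x => ?_)
    have heven : gaussianPDFReal 0 v (-x) = gaussianPDFReal 0 v x := by
      unfold gaussianPDFReal
      simp [neg_sq]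
    rw [heven]; ring
  rw [hodd, integral_mul_const, integral_gaussianPDFReal_eq_one _ hv]
  ring

lemma myGammaSqLe {s : ℝ} (hs : 0 < s) :
    Real.Gamma (1 + s) ^ 2 ≤ Real.Gamma (1 + 2 * s) := by
  have hc := Real.convexOn_log_Gamma
  have h := hc.2 (x := 1) (y := 1 + 2 * s) (by simp : (1:ℝ) ∈ Ioi 0)
    (by simp; linarith : (1 + 2*s : ℝ) ∈ Ioi 0) (by norm_num : (0:ℝ) ≤ 1/2)
    (by norm_num : (0:ℝ) ≤ 1/2) (by norm_num)
  have hmid : (1/2 : ℝ) • (1:ℝ) + (1/2 : ℝ) • (1 + 2*s) = 1 + s := by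
    simp [smul_eq_mul]; ring
  rw [hmid] at h
  simp only [Function.comp, smul_eq_mul, Real.Gamma_one, Real.log_one, mul_zero, zero_add] at h
  have g1 : 0 < Real.Gamma (1 + s) := Real.Gamma_pos_of_pos (by linarith)
  have g2 : 0 < Real.Gamma (1 + 2*s) := Real.Gamma_pos_of_pos (by linarith)
  have h2 := Real.exp_le_exp.mpr (show 2 * Real.log (Real.Gamma (1+s))
      ≤ Real.log (Real.Gamma (1+2*s)) by linarith)
  rw [Real.exp_log g2] at h2
  calc Real.Gamma (1+s) ^ 2 = Real.exp (2 * Real.log (Real.Gamma (1+s))) := by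
        rw [mul_comm, Real.exp_mul, Real.exp_log g1, Real.rpow_two]
    _ ≤ Real.Gamma (1 + 2*s) := h2

lemma myKurtLt (r : ℝ) (h1 : 3/4 < r) (h2 : r ≤ 1) :
    6 * (8 * r ^ 2 - 4 * r - 1) * (Real.Gamma (2 * (2 * r - 1))) ^ 2
      / ((8 * r - 5) * Real.Gamma (4 * (2 * r - 1))) < 3 := by
  have hs : 0 < 4 * r - 3 := by linarith
  have e1 : 2 * (2 * r - 1) = 1 + (4 * r - 3) := by ring
  have e2 : 4 * (2 * r - 1) = (1 + 2 * (4 * r - 3)) + 1 := by ring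
  rw [e1, e2, Real.Gamma_add_one (by nlinarith : (1 + 2 * (4 * r - 3) : ℝ) ≠ 0)]
  have gle := myGammaSqLe hs
  have g1 : 0 < Real.Gamma (1 + (4 * r - 3)) := Real.Gamma_pos_of_pos (by linarith)
  have g2 : 0 < Real.Gamma (1 + 2 * (4 * r - 3)) := Real.Gamma_pos_of_pos (by linarith)
  have hden : 0 < (8 * r - 5) * ((1 + 2 * (4 * r - 3)) * Real.Gamma (1 + 2 * (4 * r - 3))) := by
    have h5 : (0:ℝ) < 8 * r - 5 := by linarith
    have h6 : (0:ℝ) < 1 + 2 * (4 * r - 3) := by linarith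
    positivity
  rw [div_lt_iff₀ hden]
  have hA : (0:ℝ) < 8 * r ^ 2 - 4 * r - 1 := by nlinarith [sq_nonneg (4 * r - 3)]
  have step1 : 6 * (8 * r ^ 2 - 4 * r - 1) * (Real.Gamma (1 + (4 * r - 3))) ^ 2
      ≤ 6 * (8 * r ^ 2 - 4 * r - 1) * Real.Gamma (1 + 2 * (4 * r - 3)) :=
    mul_le_mul_of_nonneg_left gle (by linarith)
  have h9 : (0:ℝ) < 3 * ((8 * r - 5) * (1 + 2 * (4 * r - 3))) - 6 * (8 * r ^ 2 - 4 * r - 1) := by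
    nlinarith [pow_pos hs 2]
  nlinarith [mul_pos h9 g2]

end ErwAux

/-- Superdiffusive regime with `q = 1/2`: the limit `L` of `S_n/n^{2p-1}` has mean `0`,
skewness `0`, and kurtosis `κ(p) = 6(8p²-4p-1)Γ(2(2p-1))²/((8p-5)Γ(4(2p-1)))`;
moreover `κ(p) < 3` for all `p ∈ (3/4, 1]`, so `L` is not Gaussian. -/
theorem erw_limit_not_gaussian
    {Ω : Type*} [m0 : MeasurableSpace Ω] (μ : Measure Ω) [IsProbabilityMeasure μ]
    (p : ℝ) (hp : 3 / 4 < p) (hp1 : p < 1)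
    (L : Ω → ℝ) (hL : Measurable L)
    (hint : ∀ i ≤ 4, Integrable (fun ω => (L ω) ^ i) μ)
    (hm1 : ∫ ω, L ω ∂μ = 0)
    (hm2 : ∫ ω, (L ω) ^ 2 ∂μ = 1 / ((4 * p - 3) * Real.Gamma (2 * (2 * p - 1))))
    (hm3 : ∫ ω, (L ω) ^ 3 ∂μ = 0)
    (hm4 : ∫ ω, (L ω) ^ 4 ∂μ
      = 6 * (8 * p ^ 2 - 4 * p - 1)
          / ((8 * p - 5) * (4 * p - 3) ^ 2 * Real.Gamma (4 * (2 * p - 1)))) :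
    (∫ ω, L ω ∂μ = 0)
    ∧ (∫ ω, (L ω) ^ 3 ∂μ) / (Real.sqrt (∫ ω, (L ω) ^ 2 ∂μ)) ^ 3 = 0
    ∧ (∫ ω, (L ω) ^ 4 ∂μ) / (∫ ω, (L ω) ^ 2 ∂μ) ^ 2
        = 6 * (8 * p ^ 2 - 4 * p - 1) * (Real.Gamma (2 * (2 * p - 1))) ^ 2
            / ((8 * p - 5) * Real.Gamma (4 * (2 * p - 1)))
    ∧ (∀ r : ℝ, 3 / 4 < r → r ≤ 1 →
        6 * (8 * r ^ 2 - 4 * r - 1) * (Real.Gamma (2 * (2 * r - 1))) ^ 2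
            / ((8 * r - 5) * Real.Gamma (4 * (2 * r - 1))) < 3)
    ∧ ¬ ∃ (m : ℝ) (v : ℝ≥0), Measure.map L μ = gaussianReal m v := by
  have h43 : (0:ℝ) < 4 * p - 3 := by linarith
  have h85 : (0:ℝ) < 8 * p - 5 := by linarith
  have hG2 : 0 < Real.Gamma (2 * (2 * p - 1)) := Real.Gamma_pos_of_pos (by linarith)
  have hG4 : 0 < Real.Gamma (4 * (2 * p - 1)) := Real.Gamma_pos_of_pos (by linarith)
  have hc : 0 < ∫ ω, (L ω) ^ 2 ∂μ := by
    rw [hm2]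
    exact div_pos one_pos (mul_pos h43 hG2)
  have hk : (∫ ω, (L ω) ^ 4 ∂μ) / (∫ ω, (L ω) ^ 2 ∂μ) ^ 2
      = 6 * (8 * p ^ 2 - 4 * p - 1) * (Real.Gamma (2 * (2 * p - 1))) ^ 2
          / ((8 * p - 5) * Real.Gamma (4 * (2 * p - 1))) := by
    rw [hm4, hm2]
    have := h85.ne'; have := h43.ne'; have := hG2.ne'; have := hG4.ne'
    field_simp
    rw [mul_comm (p * (8 * p - 4) - 1), mul_assoc, mul_div_mul_left _ _ (by linarith : p * 4 - 3 ≠ 0)]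
  refine ⟨hm1, by rw [hm3]; exact zero_div _, hk, fun r hr1 hr2 => myKurtLt r hr1 hr2, ?_⟩
  rintro ⟨m, v, h⟩
  have hmap : ∀ (f : ℝ → ℝ), Measurable f →
      ∫ x, f x ∂(gaussianReal m v) = ∫ ω, f (L ω) ∂μ := by
    intro f hf
    rw [← h, integral_map hL.aemeasurable hf.aestronglyMeasurable]
  have E1 : ∫ x, x ∂(gaussianReal m v) = 0 :=
    (hmap (fun x => x) measurable_id).trans hm1
  have E2 : ∫ x, x ^ 2 ∂(gaussianReal m v) = ∫ ω, (L ω) ^ 2 ∂μ :=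
    hmap _ (measurable_id.pow_const 2)
  have E4 : ∫ x, x ^ 4 ∂(gaussianReal m v) = ∫ ω, (L ω) ^ 4 ∂μ :=
    hmap _ (measurable_id.pow_const 4)
  by_cases hv : v = 0
  · subst hv
    rw [gaussianReal_zero_var] at E1 E2
    rw [integral_dirac] at E1 E2
    rw [E1] at E2
    simp only [ne_eq, OfNat.ofNat_ne_zero, not_false_eq_true, zero_pow] at E2
    linarith
  · have hm0 : m = 0 := by rw [myGaussMoment1 m hv] at E1; exact E1
    subst hm0
    rw [myGaussMoment2 hv] at E2
    rw [myGaussMoment4 hv] at E4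
    have hL4 : ∫ ω, (L ω) ^ 4 ∂μ = 3 * (∫ ω, (L ω) ^ 2 ∂μ) ^ 2 := by
      rw [← E4, E2]
    have hk3 : (6 : ℝ) * (8 * p ^ 2 - 4 * p - 1) * (Real.Gamma (2 * (2 * p - 1))) ^ 2
        / ((8 * p - 5) * Real.Gamma (4 * (2 * p - 1))) = 3 := by
      rw [← hk, hL4]
      field_simp
    have := myKurtLt p hp (le_of_lt hp1)
    rw [hk3] at this
    exact lt_irrefl _ this
end
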